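/- arXiv:2303.16419 — 2 statements merged into one kernel-verified Lean document; each statement's English description precedes it below -/
import Mathlib

section
/- The forgetful functor U from the category Cf of strict globular ω-categories to the category Qf of globular ω-sets admits a left adjoint F, the free strict globular ω-category functor: for every globular ω-set Q there is a morphism of globular ω-sets η_Q : Q → U(F(Q)) such that for every morphism of globular ω-sets φ : Q → U(Ĉ) into the underlying globular ω-set of a strict globular ω-category Ĉ there exists a unique ω-functor φ̂ : F(Q) → Ĉ with φ = U(φ̂) ∘ η_Q. -/
open CategoryTheory CategoryTheory.Limits

/-- A globular ω-set: a sequence of sets with source and target maps satisfying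
the globularity conditions. -/
structure GlobSet : Type 1 where
  cells : ℕ → Type
  src : ∀ n, cells (n + 1) → cells n
  tgt : ∀ n, cells (n + 1) → cells n
  glob_ss : ∀ n (x : cells (n + 2)), src n (src (n + 1) x) = src n (tgt (n + 1) x)
  glob_tt : ∀ n (x : cells (n + 2)), tgt n (src (n + 1) x) = tgt n (tgt (n + 1) x)

/-- A (covariant) morphism of globular ω-sets. -/
structure GlobHom (Q R : GlobSet) : Type where
  app : ∀ n, Q.cells n → R.cells n
  app_src : ∀ n x, R.src n (app (n + 1) x) = app n (Q.src n x)
  app_tgt : ∀ n x, R.tgt n (app (n + 1) x) = app n (Q.tgt n x)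

theorem GlobHom.hext {Q R : GlobSet} {f g : GlobHom Q R}
    (h : ∀ n x, f.app n x = g.app n x) : f = g := by
  obtain ⟨fa, _, _⟩ := f
  obtain ⟨ga, _, _⟩ := g
  have : fa = ga := funext fun n => funext fun x => h n x
  subst this
  rfl

/-- The category `Qf` of globular ω-sets. -/
instance : Category GlobSet where
  Hom := GlobHom
  id Q := ⟨fun _ x => x, fun _ _ => rfl, fun _ _ => rfl⟩
  comp f g := ⟨fun n x => g.app n (f.app n x),
    fun n x => by rw [g.app_src, f.app_src],
    fun n x => by rw [g.app_tgt, f.app_tgt]⟩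
  id_comp f := GlobHom.hext fun _ _ => rfl
  comp_id f := GlobHom.hext fun _ _ => rfl
  assoc f g h := GlobHom.hext fun _ _ => rfl

@[simp] theorem GlobHom.comp_app {Q R S : GlobSet} (f : Q ⟶ R) (g : R ⟶ S) (n x) :
    (f ≫ g).app n x = g.app n (f.app n x) := rfl

@[simp] theorem GlobHom.id_app (Q : GlobSet) (n x) : (𝟙 Q : Q ⟶ Q).app n x = x := rfl

theorem GlobHom.congr_app {Q R : GlobSet} {f g : Q ⟶ R} (h : f = g) (n x) :
    f.app n x = g.app n x := by rw [h]

/-- Parallel cells in a globular ω-set. -/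
def GlobSet.Parallel (Q : GlobSet) : ∀ n, Q.cells n → Q.cells n → Prop
  | 0, _, _ => True
  | n + 1, x, y => Q.src n x = Q.src n y ∧ Q.tgt n x = Q.tgt n y

theorem GlobHom.parallel_map {Q R : GlobSet} (φ : Q ⟶ R) :
    ∀ {n} {x y : Q.cells n}, Q.Parallel n x y → R.Parallel n (φ.app n x) (φ.app n y) := by
  intro n x y h
  cases n with
  | zero => trivial
  | succ n =>
    exact ⟨by rw [φ.app_src, φ.app_src, h.1], by rw [φ.app_tgt, φ.app_tgt, h.2]⟩

/-- A (Leinster) contraction on a morphism `π : Q ⟶ R` of globular ω-sets. -/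
structure Contraction {Q R : GlobSet} (π : Q ⟶ R) where
  κ : ∀ n (xp xm : Q.cells n) (y : R.cells (n + 1)),
      Q.Parallel n xp xm → R.src n y = π.app n xm → R.tgt n y = π.app n xp → Q.cells (n + 1)
  κ_src : ∀ n xp xm y hp hs ht, Q.src n (κ n xp xm y hp hs ht) = xm
  κ_tgt : ∀ n xp xm y hp hs ht, Q.tgt n (κ n xp xm y hp hs ht) = xp
  κ_π : ∀ n xp xm y hp hs ht, π.app (n + 1) (κ n xp xm y hp hs ht) = y

/-- A terminal globular ω-set `•`. -/
def GlobSet.pt : GlobSet where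
  cells _ := PUnit
  src _ _ := PUnit.unit
  tgt _ _ := PUnit.unit
  glob_ss _ _ := rfl
  glob_tt _ _ := rfl

/-- The terminal morphism to `•`. -/
def GlobSet.toPt (Q : GlobSet) : Q ⟶ GlobSet.pt :=
  ⟨fun _ _ => PUnit.unit, fun _ _ => rfl, fun _ _ => rfl⟩

theorem GlobSet.hom_pt_ext {Q : GlobSet} (f g : Q ⟶ GlobSet.pt) : f = g :=
  GlobHom.hext fun _ _ => rfl

/-- The empty globular ω-set. -/
def GlobSet.empty : GlobSet where
  cells _ := PEmpty
  src _ x := x.elim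
  tgt _ x := x.elim
  glob_ss _ x := x.elim
  glob_tt _ x := x.elim

/-- The levelwise fibered product of a cospan of globular ω-sets. -/
def GlobSet.pb {Q R X : GlobSet} (φ : Q ⟶ X) (ψ : R ⟶ X) : GlobSet where
  cells n := { p : Q.cells n × R.cells n // φ.app n p.1 = ψ.app n p.2 }
  src n x := ⟨(Q.src n x.1.1, R.src n x.1.2), by rw [← φ.app_src, ← ψ.app_src, x.2]⟩
  tgt n x := ⟨(Q.tgt n x.1.1, R.tgt n x.1.2), by rw [← φ.app_tgt, ← ψ.app_tgt, x.2]⟩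
  glob_ss n x := Subtype.ext (by
    show (Q.src n (Q.src (n+1) x.1.1), R.src n (R.src (n+1) x.1.2))
        = (Q.src n (Q.tgt (n+1) x.1.1), R.src n (R.tgt (n+1) x.1.2))
    rw [Q.glob_ss, R.glob_ss])
  glob_tt n x := Subtype.ext (by
    show (Q.tgt n (Q.src (n+1) x.1.1), R.tgt n (R.src (n+1) x.1.2))
        = (Q.tgt n (Q.tgt (n+1) x.1.1), R.tgt n (R.tgt (n+1) x.1.2))
    rw [Q.glob_tt, R.glob_tt])

/-- First projection of the levelwise fibered product. -/
def GlobSet.pbFst {Q R X : GlobSet} (φ : Q ⟶ X) (ψ : R ⟶ X) : GlobSet.pb φ ψ ⟶ Q :=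
  ⟨fun _ x => x.1.1, fun _ _ => rfl, fun _ _ => rfl⟩

/-- Second projection of the levelwise fibered product. -/
def GlobSet.pbSnd {Q R X : GlobSet} (φ : Q ⟶ X) (ψ : R ⟶ X) : GlobSet.pb φ ψ ⟶ R :=
  ⟨fun _ x => x.1.2, fun _ _ => rfl, fun _ _ => rfl⟩
/-- Iterated source map. -/
def GlobSet.srcIter (Q : GlobSet) : ∀ (k : ℕ) {n : ℕ}, Q.cells (n + k) → Q.cells n
  | 0, _, x => x
  | k + 1, n, x => Q.srcIter k (Q.src (n + k) x)

/-- Iterated target map. -/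
def GlobSet.tgtIter (Q : GlobSet) : ∀ (k : ℕ) {n : ℕ}, Q.cells (n + k) → Q.cells n
  | 0, _, x => x
  | k + 1, n, x => Q.tgtIter k (Q.tgt (n + k) x)

/-- Iterated identity map. -/
def iterId (cells : ℕ → Type) (id' : ∀ n, cells n → cells (n + 1)) :
    ∀ (k : ℕ) {n : ℕ}, cells n → cells (n + k)
  | 0, _, x => x
  | k + 1, n, x => id' (n + k) (iterId cells id' k x)

/-- Transport of cells along an equality of levels. -/
def GlobSet.castCell (Q : GlobSet) {m m' : ℕ} (h : m = m') : Q.cells m → Q.cells m' :=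
  fun x => h ▸ x

theorem GlobHom.app_srcIter {Q R : GlobSet} (φ : GlobHom Q R) (k : ℕ) :
    ∀ {n : ℕ} (x : Q.cells (n + k)), φ.app n (Q.srcIter k x) = R.srcIter k (φ.app (n + k) x) := by
  induction k with
  | zero => intro n x; rfl
  | succ k ih =>
    intro n x
    show φ.app n (Q.srcIter k (Q.src (n + k) x)) = R.srcIter k (R.src (n + k) (φ.app (n + k + 1) x))
    rw [ih, ← φ.app_src]

theorem GlobHom.app_tgtIter {Q R : GlobSet} (φ : GlobHom Q R) (k : ℕ) :
    ∀ {n : ℕ} (x : Q.cells (n + k)), φ.app n (Q.tgtIter k x) = R.tgtIter k (φ.app (n + k) x) := by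
  induction k with
  | zero => intro n x; rfl
  | succ k ih =>
    intro n x
    show φ.app n (Q.tgtIter k (Q.tgt (n + k) x)) = R.tgtIter k (R.tgt (n + k) (φ.app (n + k + 1) x))
    rw [ih, ← φ.app_tgt]

/-- A strict globular ω-category: a globular ω-set with identities `id'` and partial
compositions `comp p k` (composition `∘^m_p` with `m = p + (k+1)`) satisfying compatibility
with sources/targets, associativity, unitality, functoriality of identities and binary
exchange.  In `comp p k x' x h` the pair `(x', x)` satisfies the composability condition
`h : srcIter x' = tgtIter x` (i.e. the iterated `p`-source of `x'` equals the iterated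
`p`-target of `x`), and the composite means `x' ∘^m_p x`. -/
structure StrictOmegaCat extends GlobSet where
  id' : ∀ n, toGlobSet.cells n → toGlobSet.cells (n + 1)
  id_src : ∀ n x, toGlobSet.src n (id' n x) = x
  id_tgt : ∀ n x, toGlobSet.tgt n (id' n x) = x
  comp : ∀ (p k : ℕ) (x' x : toGlobSet.cells (p + (k + 1))),
      toGlobSet.srcIter (k + 1) x' = toGlobSet.tgtIter (k + 1) x → toGlobSet.cells (p + (k + 1))
  comp_src_zero : ∀ p (x' x : toGlobSet.cells (p + 1))
      (h : toGlobSet.srcIter 1 x' = toGlobSet.tgtIter 1 x),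
      toGlobSet.src p (comp p 0 x' x h) = toGlobSet.src p x
  comp_tgt_zero : ∀ p (x' x : toGlobSet.cells (p + 1))
      (h : toGlobSet.srcIter 1 x' = toGlobSet.tgtIter 1 x),
      toGlobSet.tgt p (comp p 0 x' x h) = toGlobSet.tgt p x'
  comp_src_succ : ∀ p k (x' x : toGlobSet.cells (p + (k + 2)))
      (h : toGlobSet.srcIter (k + 2) x' = toGlobSet.tgtIter (k + 2) x)
      (h' : toGlobSet.srcIter (k + 1) (toGlobSet.src (p + (k + 1)) x')
          = toGlobSet.tgtIter (k + 1) (toGlobSet.src (p + (k + 1)) x)),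
      toGlobSet.src (p + (k + 1)) (comp p (k + 1) x' x h)
        = comp p k (toGlobSet.src (p + (k + 1)) x') (toGlobSet.src (p + (k + 1)) x) h'
  comp_tgt_succ : ∀ p k (x' x : toGlobSet.cells (p + (k + 2)))
      (h : toGlobSet.srcIter (k + 2) x' = toGlobSet.tgtIter (k + 2) x)
      (h' : toGlobSet.srcIter (k + 1) (toGlobSet.tgt (p + (k + 1)) x')
          = toGlobSet.tgtIter (k + 1) (toGlobSet.tgt (p + (k + 1)) x)),
      toGlobSet.tgt (p + (k + 1)) (comp p (k + 1) x' x h)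
        = comp p k (toGlobSet.tgt (p + (k + 1)) x') (toGlobSet.tgt (p + (k + 1)) x) h'
  comp_assoc : ∀ p k (z y x : toGlobSet.cells (p + (k + 1)))
      (hzy : toGlobSet.srcIter (k + 1) z = toGlobSet.tgtIter (k + 1) y)
      (hyx : toGlobSet.srcIter (k + 1) y = toGlobSet.tgtIter (k + 1) x)
      (hl : toGlobSet.srcIter (k + 1) (comp p k z y hzy) = toGlobSet.tgtIter (k + 1) x)
      (hr : toGlobSet.srcIter (k + 1) z = toGlobSet.tgtIter (k + 1) (comp p k y x hyx)),
      comp p k (comp p k z y hzy) x hl = comp p k z (comp p k y x hyx) hr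
  comp_unit_left : ∀ p k (x : toGlobSet.cells (p + (k + 1)))
      (h : toGlobSet.srcIter (k + 1)
            (iterId toGlobSet.cells id' (k + 1) (toGlobSet.tgtIter (k + 1) x))
          = toGlobSet.tgtIter (k + 1) x),
      comp p k (iterId toGlobSet.cells id' (k + 1) (toGlobSet.tgtIter (k + 1) x)) x h = x
  comp_unit_right : ∀ p k (x : toGlobSet.cells (p + (k + 1)))
      (h : toGlobSet.srcIter (k + 1) x
          = toGlobSet.tgtIter (k + 1)
              (iterId toGlobSet.cells id' (k + 1) (toGlobSet.srcIter (k + 1) x))),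
      comp p k x (iterId toGlobSet.cells id' (k + 1) (toGlobSet.srcIter (k + 1) x)) h = x
  id_comp' : ∀ p k (x' x : toGlobSet.cells (p + (k + 1)))
      (h : toGlobSet.srcIter (k + 1) x' = toGlobSet.tgtIter (k + 1) x)
      (h' : toGlobSet.srcIter (k + 2) (id' (p + (k + 1)) x')
          = toGlobSet.tgtIter (k + 2) (id' (p + (k + 1)) x)),
      id' (p + (k + 1)) (comp p k x' x h)
        = comp p (k + 1) (id' (p + (k + 1)) x') (id' (p + (k + 1)) x) h'
  exchange : ∀ (q d k j : ℕ) (he : (q + (d + 1)) + (k + 1) = q + (j + 1))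
      (y' y x' x : toGlobSet.cells ((q + (d + 1)) + (k + 1)))
      (h₁ : toGlobSet.srcIter (k + 1) y' = toGlobSet.tgtIter (k + 1) y)
      (h₂ : toGlobSet.srcIter (k + 1) x' = toGlobSet.tgtIter (k + 1) x)
      (h₃ : toGlobSet.srcIter (j + 1) (toGlobSet.castCell he (comp (q + (d + 1)) k y' y h₁))
          = toGlobSet.tgtIter (j + 1) (toGlobSet.castCell he (comp (q + (d + 1)) k x' x h₂)))
      (h₄ : toGlobSet.srcIter (j + 1) (toGlobSet.castCell he y')
          = toGlobSet.tgtIter (j + 1) (toGlobSet.castCell he x'))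
      (h₅ : toGlobSet.srcIter (j + 1) (toGlobSet.castCell he y)
          = toGlobSet.tgtIter (j + 1) (toGlobSet.castCell he x))
      (h₆ : toGlobSet.srcIter (k + 1)
              (toGlobSet.castCell he.symm (comp q j (toGlobSet.castCell he y') (toGlobSet.castCell he x') h₄))
          = toGlobSet.tgtIter (k + 1)
              (toGlobSet.castCell he.symm (comp q j (toGlobSet.castCell he y) (toGlobSet.castCell he x) h₅))),
      comp q j (toGlobSet.castCell he (comp (q + (d + 1)) k y' y h₁))
          (toGlobSet.castCell he (comp (q + (d + 1)) k x' x h₂)) h₃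
        = toGlobSet.castCell he (comp (q + (d + 1)) k
            (toGlobSet.castCell he.symm (comp q j (toGlobSet.castCell he y') (toGlobSet.castCell he x') h₄))
            (toGlobSet.castCell he.symm (comp q j (toGlobSet.castCell he y) (toGlobSet.castCell he x) h₅)) h₆)

/-- An ω-functor between strict globular ω-categories. -/
structure StrictFunctor (C D : StrictOmegaCat) where
  toGlobHom : C.toGlobSet ⟶ D.toGlobSet
  map_id : ∀ n x, toGlobHom.app (n + 1) (C.id' n x) = D.id' n (toGlobHom.app n x)
  map_comp : ∀ p k (x' x : C.toGlobSet.cells (p + (k + 1)))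
      (h : C.toGlobSet.srcIter (k + 1) x' = C.toGlobSet.tgtIter (k + 1) x)
      (h' : D.toGlobSet.srcIter (k + 1) (toGlobHom.app (p + (k + 1)) x')
          = D.toGlobSet.tgtIter (k + 1) (toGlobHom.app (p + (k + 1)) x)),
      toGlobHom.app (p + (k + 1)) (C.comp p k x' x h)
        = D.comp p k (toGlobHom.app (p + (k + 1)) x') (toGlobHom.app (p + (k + 1)) x) h'

theorem StrictFunctor.hext {C D : StrictOmegaCat} {F G : StrictFunctor C D}
    (h : F.toGlobHom = G.toGlobHom) : F = G := by
  cases F; cases G; cases h; rfl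

/-- The category `Cf` of strict globular ω-categories. -/
instance : CategoryStruct StrictOmegaCat where
  Hom := StrictFunctor
  id C := { toGlobHom := 𝟙 C.toGlobSet, map_id := fun _ _ => rfl,
            map_comp := fun _ _ _ _ _ _ => rfl }
  comp {C D E} F G :=
    { toGlobHom := F.toGlobHom ≫ G.toGlobHom
      map_id := fun n x => by
        show G.toGlobHom.app (n + 1) (F.toGlobHom.app (n + 1) (C.id' n x))
          = E.id' n (G.toGlobHom.app n (F.toGlobHom.app n x))
        rw [F.map_id, G.map_id]
      map_comp := fun p k x' x h h' => by
        have hD : D.toGlobSet.srcIter (k + 1) (F.toGlobHom.app (p + (k + 1)) x')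
            = D.toGlobSet.tgtIter (k + 1) (F.toGlobHom.app (p + (k + 1)) x) := by
          rw [← GlobHom.app_srcIter, ← GlobHom.app_tgtIter, h]
        show G.toGlobHom.app (p + (k + 1)) (F.toGlobHom.app (p + (k + 1)) (C.comp p k x' x h))
          = E.comp p k (G.toGlobHom.app (p + (k + 1)) (F.toGlobHom.app (p + (k + 1)) x'))
              (G.toGlobHom.app (p + (k + 1)) (F.toGlobHom.app (p + (k + 1)) x)) h'
        rw [F.map_comp p k x' x h hD, G.map_comp p k _ _ hD] }

instance : Category StrictOmegaCat where
  id_comp F := StrictFunctor.hext (by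
    show 𝟙 _ ≫ F.toGlobHom = F.toGlobHom
    simp)
  comp_id F := StrictFunctor.hext (by
    show F.toGlobHom ≫ 𝟙 _ = F.toGlobHom
    simp)
  assoc F G H := StrictFunctor.hext (by
    show (F.toGlobHom ≫ G.toGlobHom) ≫ H.toGlobHom = F.toGlobHom ≫ (G.toGlobHom ≫ H.toGlobHom)
    simp)

/-- The forgetful functor `U : Cf ⥤ Qf`. -/
def forgetStrict : StrictOmegaCat ⥤ GlobSet where
  obj C := C.toGlobSet
  map F := F.toGlobHom
  map_id _ := rfl
  map_comp _ _ := rfl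
namespace FreeOmega

/-- Formal composition terms over a globular ω-set. -/
inductive W (Q : GlobSet) : ℕ → Type
  | gen {n : ℕ} : Q.cells n → W Q n
  | id' {n : ℕ} : W Q n → W Q (n + 1)
  | comp (p k : ℕ) : W Q (p + (k + 1)) → W Q (p + (k + 1)) → W Q (p + (k + 1))

variable {Q : GlobSet}

/-- Source of a term. -/
def Wsrc : ∀ {n : ℕ}, W Q (n + 1) → W Q n
  | _, .gen x => .gen (Q.src _ x)
  | _, .id' w => w
  | _, .comp p 0 _ w => Wsrc w
  | _, .comp p (k+1) w' w => .comp p k (Wsrc w') (Wsrc w)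

/-- Target of a term. -/
def Wtgt : ∀ {n : ℕ}, W Q (n + 1) → W Q n
  | _, .gen x => .gen (Q.tgt _ x)
  | _, .id' w => w
  | _, .comp p 0 w' _ => Wtgt w'
  | _, .comp p (k+1) w' w => .comp p k (Wtgt w') (Wtgt w)

@[simp] theorem Wsrc_gen {n : ℕ} (x : Q.cells (n+1)) :
    Wsrc (W.gen x) = W.gen (Q.src n x) := by simp [Wsrc]
@[simp] theorem Wsrc_id {n : ℕ} (w : W Q n) : Wsrc (W.id' w) = w := by simp [Wsrc]
@[simp] theorem Wsrc_comp_zero (p : ℕ) (w' w : W Q (p+1)) :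
    Wsrc (W.comp p 0 w' w) = Wsrc w := by simp [Wsrc]
@[simp] theorem Wsrc_comp_succ (p k : ℕ) (w' w : W Q (p+(k+2))) :
    Wsrc (W.comp p (k+1) w' w) = W.comp p k (Wsrc w') (Wsrc w) := by simp [Wsrc]
@[simp] theorem Wtgt_gen {n : ℕ} (x : Q.cells (n+1)) :
    Wtgt (W.gen x) = W.gen (Q.tgt n x) := by simp [Wtgt]
@[simp] theorem Wtgt_id {n : ℕ} (w : W Q n) : Wtgt (W.id' w) = w := by simp [Wtgt]
@[simp] theorem Wtgt_comp_zero (p : ℕ) (w' w : W Q (p+1)) :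
    Wtgt (W.comp p 0 w' w) = Wtgt w' := by simp [Wtgt]
@[simp] theorem Wtgt_comp_succ (p k : ℕ) (w' w : W Q (p+(k+2))) :
    Wtgt (W.comp p (k+1) w' w) = W.comp p k (Wtgt w') (Wtgt w) := by simp [Wtgt]

/-- Iterated source of a term. -/
def WsrcIter : ∀ (k : ℕ) {n : ℕ}, W Q (n + k) → W Q n
  | 0, _, w => w
  | k+1, _, w => WsrcIter k (Wsrc w)

/-- Iterated target of a term. -/
def WtgtIter : ∀ (k : ℕ) {n : ℕ}, W Q (n + k) → W Q n
  | 0, _, w => w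
  | k+1, _, w => WtgtIter k (Wtgt w)

@[simp] theorem WsrcIter_zero {n : ℕ} (w : W Q n) : WsrcIter 0 w = w := rfl
@[simp] theorem WsrcIter_succ (k : ℕ) {n : ℕ} (w : W Q (n+(k+1))) :
    WsrcIter (k+1) w = WsrcIter k (Wsrc w) := rfl
@[simp] theorem WtgtIter_zero {n : ℕ} (w : W Q n) : WtgtIter 0 w = w := rfl
@[simp] theorem WtgtIter_succ (k : ℕ) {n : ℕ} (w : W Q (n+(k+1))) :
    WtgtIter (k+1) w = WtgtIter k (Wtgt w) := rfl

/-- Iterated identity on terms. -/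
abbrev WiterId : ∀ (k : ℕ) {n : ℕ}, W Q n → W Q (n + k) :=
  iterId (W Q) (fun _ w => W.id' w)

@[simp] theorem WiterId_zero {n : ℕ} (w : W Q n) : WiterId 0 w = w := rfl
@[simp] theorem WiterId_succ (k : ℕ) {n : ℕ} (w : W Q n) :
    WiterId (k+1) w = W.id' (WiterId k w) := rfl

/-- Cast of terms along an equality of levels. -/
def Wcast {m m' : ℕ} (h : m = m') : W Q m → W Q m' := fun w => h ▸ w

theorem WsrcIter_iterId : ∀ (k : ℕ) {n : ℕ} (w : W Q n), WsrcIter k (WiterId k w) = w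
  | 0, _, _ => rfl
  | k+1, n, w => by
      rw [WiterId_succ, WsrcIter_succ, Wsrc_id]
      exact WsrcIter_iterId k w

theorem WtgtIter_iterId : ∀ (k : ℕ) {n : ℕ} (w : W Q n), WtgtIter k (WiterId k w) = w
  | 0, _, _ => rfl
  | k+1, n, w => by
      rw [WiterId_succ, WtgtIter_succ, Wtgt_id]
      exact WtgtIter_iterId k w

theorem WsrcIter_comp : ∀ (k p : ℕ) (w' w : W Q (p + (k + 1))),
    WsrcIter (k+1) (W.comp p k w' w) = WsrcIter (k+1) w
  | 0, p, w', w => by simp [Wsrc]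
  | k+1, p, w', w => by
      rw [WsrcIter_succ, Wsrc_comp_succ, WsrcIter_comp k p (Wsrc w') (Wsrc w)]
      rfl

theorem WtgtIter_comp : ∀ (k p : ℕ) (w' w : W Q (p + (k + 1))),
    WtgtIter (k+1) (W.comp p k w' w) = WtgtIter (k+1) w'
  | 0, p, w', w => by simp [Wtgt]
  | k+1, p, w', w => by
      rw [WtgtIter_succ, Wtgt_comp_succ, WtgtIter_comp k p (Wtgt w') (Wtgt w)]
      rfl

/-- The congruence/composability relation on terms: `R a b` means `a` and `b` are
well-formed terms that denote the same cell of the free ω-category. -/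
inductive R : ∀ {n : ℕ}, W Q n → W Q n → Prop
  | gen {n : ℕ} (x : Q.cells n) : R (.gen x) (.gen x)
  | symm {n : ℕ} {a b : W Q n} : R a b → R b a
  | trans {n : ℕ} {a b c : W Q n} : R a b → R b c → R a c
  | srcR {n : ℕ} {a b : W Q (n+1)} : R a b → R (Wsrc a) (Wsrc b)
  | tgtR {n : ℕ} {a b : W Q (n+1)} : R a b → R (Wtgt a) (Wtgt b)
  | glob_s {n : ℕ} {a b : W Q (n+2)} : R a b → R (Wsrc (Wsrc a)) (Wsrc (Wtgt b))
  | glob_t {n : ℕ} {a b : W Q (n+2)} : R a b → R (Wtgt (Wsrc a)) (Wtgt (Wtgt b))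
  | idCongr {n : ℕ} {a b : W Q n} : R a b → R (.id' a) (.id' b)
  | compCongr {p k : ℕ} {a a' b b' : W Q (p + (k+1))} :
      R a a' → R b b' → R (WsrcIter (k+1) a) (WtgtIter (k+1) b) →
      R (.comp p k a b) (.comp p k a' b')
  | assoc {p k : ℕ} {z y x : W Q (p + (k+1))} :
      R z z → R y y → R x x →
      R (WsrcIter (k+1) z) (WtgtIter (k+1) y) →
      R (WsrcIter (k+1) y) (WtgtIter (k+1) x) →
      R (.comp p k (.comp p k z y) x) (.comp p k z (.comp p k y x))
  | unitL {p k : ℕ} {x : W Q (p + (k+1))} :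
      R x x → R (.comp p k (WiterId (k+1) (WtgtIter (k+1) x)) x) x
  | unitR {p k : ℕ} {x : W Q (p + (k+1))} :
      R x x → R (.comp p k x (WiterId (k+1) (WsrcIter (k+1) x))) x
  | idComp {p k : ℕ} {a b : W Q (p + (k+1))} :
      R a a → R b b → R (WsrcIter (k+1) a) (WtgtIter (k+1) b) →
      R (.id' (.comp p k a b)) (.comp p (k+1) (.id' a) (.id' b))
  | exch {q d k j : ℕ} (he : (q + (d+1)) + (k+1) = q + (j+1))
      {y' y x' x : W Q ((q + (d+1)) + (k+1))} :
      R y' y' → R y y → R x' x' → R x x →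
      R (WsrcIter (k+1) y') (WtgtIter (k+1) y) →
      R (WsrcIter (k+1) x') (WtgtIter (k+1) x) →
      R (WsrcIter (j+1) (Wcast he (.comp (q+(d+1)) k y' y)))
        (WtgtIter (j+1) (Wcast he (.comp (q+(d+1)) k x' x))) →
      R (WsrcIter (j+1) (Wcast he y')) (WtgtIter (j+1) (Wcast he x')) →
      R (WsrcIter (j+1) (Wcast he y)) (WtgtIter (j+1) (Wcast he x)) →
      R (WsrcIter (k+1) (Wcast he.symm (.comp q j (Wcast he y') (Wcast he x'))))
        (WtgtIter (k+1) (Wcast he.symm (.comp q j (Wcast he y) (Wcast he x)))) →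
      R (.comp q j (Wcast he (.comp (q+(d+1)) k y' y)) (Wcast he (.comp (q+(d+1)) k x' x)))
        (Wcast he (.comp (q+(d+1)) k
          (Wcast he.symm (.comp q j (Wcast he y') (Wcast he x')))
          (Wcast he.symm (.comp q j (Wcast he y) (Wcast he x)))))

theorem R.reflL {n : ℕ} {a b : W Q n} (h : R a b) : R a a := h.trans h.symm
theorem R.reflR {n : ℕ} {a b : W Q n} (h : R a b) : R b b := h.symm.trans h

theorem R.srcIterR : ∀ (k : ℕ) {n : ℕ} {a b : W Q (n + k)}, R a b → R (WsrcIter k a) (WsrcIter k b)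
  | 0, _, _, _, h => h
  | k+1, _, _, _, h => R.srcIterR k h.srcR

theorem R.tgtIterR : ∀ (k : ℕ) {n : ℕ} {a b : W Q (n + k)}, R a b → R (WtgtIter k a) (WtgtIter k b)
  | 0, _, _, _, h => h
  | k+1, _, _, _, h => R.tgtIterR k h.tgtR

theorem R.iterIdR : ∀ (k : ℕ) {n : ℕ} {a b : W Q n}, R a b → R (WiterId k a) (WiterId k b)
  | 0, _, _, _, h => h
  | k+1, _, _, _, h => (R.iterIdR k h).idCongr

theorem R.castR {m m' : ℕ} (h : m = m') {a b : W Q m} (hab : R a b) :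
    R (Wcast h a) (Wcast h b) := by subst h; exact hab

/-- Derived globularity for iterated targets. -/
theorem R.tgtIter_src {k n : ℕ} {a b : W Q (n + (k+1) + 1)} (h : R a b) :
    R (WtgtIter (k+1) (Wsrc a)) (WtgtIter (k+1) (Wtgt b)) := by
  rw [WtgtIter_succ, WtgtIter_succ]
  exact R.tgtIterR k (R.glob_t h)

theorem R.srcIter_tgt {k n : ℕ} {a b : W Q (n + (k+1) + 1)} (h : R a b) :
    R (WsrcIter (k+1) (Wtgt a)) (WsrcIter (k+1) (Wsrc b)) := by
  rw [WsrcIter_succ, WsrcIter_succ]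
  exact R.srcIterR k (R.glob_s h.symm).symm

end FreeOmega
namespace FreeOmega

/-- Well-formed terms. -/
abbrev T (Q : GlobSet) (n : ℕ) : Type := {a : W Q n // R a a}

instance Tsetoid (Q : GlobSet) (n : ℕ) : Setoid (T Q n) :=
  ⟨fun a b => R a.1 b.1, ⟨fun a => a.2, R.symm, R.trans⟩⟩

/-- Cells of the free ω-category. -/
abbrev FC (Q : GlobSet) (n : ℕ) : Type := Quotient (Tsetoid Q n)

variable {Q : GlobSet}

theorem mk_sound {n : ℕ} {a b : W Q n} {ha : R a a} {hb : R b b} (h : R a b) :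
    (Quotient.mk (Tsetoid Q n) ⟨a, ha⟩ : FC Q n) = Quotient.mk _ ⟨b, hb⟩ := Quotient.sound h

theorem mk_congr {n : ℕ} {a b : W Q n} (h : a = b) (ha : R a a) (hb : R b b) :
    (Quotient.mk (Tsetoid Q n) ⟨a, ha⟩ : FC Q n) = Quotient.mk _ ⟨b, hb⟩ := by subst h; rfl

theorem mk_exact {n : ℕ} {a b : T Q n}
    (h : Quotient.mk (Tsetoid Q n) a = Quotient.mk _ b) : R a.1 b.1 := Quotient.exact h

def qsrc (n : ℕ) : FC Q (n+1) → FC Q n :=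
  Quotient.map (fun a => ⟨Wsrc a.1, a.2.srcR⟩) fun _ _ h => h.srcR

def qtgt (n : ℕ) : FC Q (n+1) → FC Q n :=
  Quotient.map (fun a => ⟨Wtgt a.1, a.2.tgtR⟩) fun _ _ h => h.tgtR

def qid (n : ℕ) : FC Q n → FC Q (n+1) :=
  Quotient.map (fun a => ⟨W.id' a.1, a.2.idCongr⟩) fun _ _ h => h.idCongr

@[simp] theorem qsrc_mk {n : ℕ} (a : T Q (n+1)) :
    qsrc n (Quotient.mk _ a) = Quotient.mk _ (⟨Wsrc a.1, a.2.srcR⟩ : T Q n) := rfl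
@[simp] theorem qtgt_mk {n : ℕ} (a : T Q (n+1)) :
    qtgt n (Quotient.mk _ a) = Quotient.mk _ (⟨Wtgt a.1, a.2.tgtR⟩ : T Q n) := rfl
@[simp] theorem qid_mk {n : ℕ} (a : T Q n) :
    qid n (Quotient.mk _ a) = Quotient.mk _ (⟨W.id' a.1, a.2.idCongr⟩ : T Q (n+1)) := rfl

/-- The underlying globular ω-set of the free ω-category. -/
def FG (Q : GlobSet) : GlobSet where
  cells := FC Q
  src := qsrc
  tgt := qtgt
  glob_ss _ x := Quotient.inductionOn x fun a => mk_sound (R.glob_s a.2)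
  glob_tt _ x := Quotient.inductionOn x fun a => mk_sound (R.glob_t a.2)

@[simp] theorem FG_src {n : ℕ} (x : FC Q (n+1)) : (FG Q).src n x = qsrc n x := rfl
@[simp] theorem FG_tgt {n : ℕ} (x : FC Q (n+1)) : (FG Q).tgt n x = qtgt n x := rfl

theorem qsrcIter_mk : ∀ (k : ℕ) {n : ℕ} (a : T Q (n+k)),
    (FG Q).srcIter k (Quotient.mk _ a) = Quotient.mk _ (⟨WsrcIter k a.1, R.srcIterR k a.2⟩ : T Q n)
  | 0, _, _ => rfl
  | k+1, n, a => by
      show (FG Q).srcIter k (qsrc (n+k) (Quotient.mk _ a)) = _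
      rw [qsrc_mk, qsrcIter_mk k]
      rfl

theorem qtgtIter_mk : ∀ (k : ℕ) {n : ℕ} (a : T Q (n+k)),
    (FG Q).tgtIter k (Quotient.mk _ a) = Quotient.mk _ (⟨WtgtIter k a.1, R.tgtIterR k a.2⟩ : T Q n)
  | 0, _, _ => rfl
  | k+1, n, a => by
      show (FG Q).tgtIter k (qtgt (n+k) (Quotient.mk _ a)) = _
      rw [qtgt_mk, qtgtIter_mk k]
      rfl

theorem qiterId_mk : ∀ (k : ℕ) {n : ℕ} (a : T Q n),
    iterId (FG Q).cells qid k (Quotient.mk _ a)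
      = Quotient.mk _ (⟨WiterId k a.1, R.iterIdR k a.2⟩ : T Q (n+k))
  | 0, _, _ => rfl
  | k+1, n, a => by
      show qid (n+k) (iterId (FG Q).cells qid k (Quotient.mk _ a)) = _
      rw [qiterId_mk k, qid_mk]
      rfl

def castT {m m' : ℕ} (h : m = m') (a : T Q m) : T Q m' := ⟨Wcast h a.1, a.2.castR h⟩

theorem qcast_mk {m m' : ℕ} (h : m = m') (a : T Q m) :
    (FG Q).castCell h (Quotient.mk _ a) = Quotient.mk _ (castT h a) := by subst h; rfl

open Classical in
/-- Composition on the free ω-category (independent of the composability proof). -/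
noncomputable def qcompAux (p k : ℕ) : FC Q (p+(k+1)) → FC Q (p+(k+1)) → FC Q (p+(k+1)) :=
  Quotient.lift₂
    (fun a b =>
      if h : R (WsrcIter (k+1) a.1) (WtgtIter (k+1) b.1)
      then Quotient.mk _ (⟨W.comp p k a.1 b.1, R.compCongr a.2 b.2 h⟩ : T Q (p+(k+1)))
      else Quotient.mk _ a)
    (by
      intro a b a' b' ha hb
      by_cases h : R (WsrcIter (k+1) a.1) (WtgtIter (k+1) b.1)
      · have h' : R (WsrcIter (k+1) a'.1) (WtgtIter (k+1) b'.1) :=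
          ((R.srcIterR (k+1) ha).symm.trans h).trans (R.tgtIterR (k+1) hb)
        simp only [dif_pos h, dif_pos h']
        exact mk_sound (R.compCongr ha hb h)
      · have h' : ¬ R (WsrcIter (k+1) a'.1) (WtgtIter (k+1) b'.1) := fun h' =>
          h (((R.srcIterR (k+1) ha).trans h').trans (R.tgtIterR (k+1) hb).symm)
        simp only [dif_neg h, dif_neg h']
        exact mk_sound ha)

theorem qcompAux_mk {p k : ℕ} (a b : T Q (p+(k+1)))
    (h : R (WsrcIter (k+1) a.1) (WtgtIter (k+1) b.1)) :
    qcompAux p k (Quotient.mk _ a) (Quotient.mk _ b)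
      = Quotient.mk _ (⟨W.comp p k a.1 b.1, R.compCongr a.2 b.2 h⟩ : T Q (p+(k+1))) :=
  dif_pos h

/-- Extract the syntactic composability relation from a cell equality. -/
theorem side_of {p k : ℕ} {a b : T Q (p+(k+1))} {X Y : FC Q (p+(k+1))}
    (hx : X = Quotient.mk _ a) (hy : Y = Quotient.mk _ b)
    (h : (FG Q).srcIter (k+1) X = (FG Q).tgtIter (k+1) Y) :
    R (WsrcIter (k+1) a.1) (WtgtIter (k+1) b.1) := by
  subst hx; subst hy
  rw [qsrcIter_mk, qtgtIter_mk] at h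
  exact mk_exact h

theorem qcomp_eq {p k : ℕ} {X Y : FC Q (p+(k+1))} {a b : T Q (p+(k+1))}
    (hx : X = Quotient.mk _ a) (hy : Y = Quotient.mk _ b)
    (h : R (WsrcIter (k+1) a.1) (WtgtIter (k+1) b.1)) :
    qcompAux p k X Y
      = Quotient.mk _ (⟨W.comp p k a.1 b.1, R.compCongr a.2 b.2 h⟩ : T Q (p+(k+1))) := by
  subst hx; subst hy; exact qcompAux_mk a b h

theorem qsrc_eq {n : ℕ} {X : FC Q (n+1)} {a : T Q (n+1)} (hx : X = Quotient.mk _ a) :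
    (FG Q).src n X = Quotient.mk _ (⟨Wsrc a.1, a.2.srcR⟩ : T Q n) := by subst hx; rfl

theorem qtgt_eq {n : ℕ} {X : FC Q (n+1)} {a : T Q (n+1)} (hx : X = Quotient.mk _ a) :
    (FG Q).tgt n X = Quotient.mk _ (⟨Wtgt a.1, a.2.tgtR⟩ : T Q n) := by subst hx; rfl

theorem qid_eq {n : ℕ} {X : FC Q n} {a : T Q n} (hx : X = Quotient.mk _ a) :
    qid n X = Quotient.mk _ (⟨W.id' a.1, a.2.idCongr⟩ : T Q (n+1)) := by subst hx; rfl

theorem qsrcIter_eq (k : ℕ) {n : ℕ} {X : FC Q (n+k)} {a : T Q (n+k)}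
    (hx : X = Quotient.mk _ a) :
    (FG Q).srcIter k X = Quotient.mk _ (⟨WsrcIter k a.1, R.srcIterR k a.2⟩ : T Q n) := by
  subst hx; exact qsrcIter_mk k a

theorem qtgtIter_eq (k : ℕ) {n : ℕ} {X : FC Q (n+k)} {a : T Q (n+k)}
    (hx : X = Quotient.mk _ a) :
    (FG Q).tgtIter k X = Quotient.mk _ (⟨WtgtIter k a.1, R.tgtIterR k a.2⟩ : T Q n) := by
  subst hx; exact qtgtIter_mk k a

theorem qiterId_eq (k : ℕ) {n : ℕ} {X : FC Q n} {a : T Q n} (hx : X = Quotient.mk _ a) :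
    iterId (FG Q).cells qid k X
      = Quotient.mk _ (⟨WiterId k a.1, R.iterIdR k a.2⟩ : T Q (n+k)) := by
  subst hx; exact qiterId_mk k a

theorem qcast_eq {m m' : ℕ} (h : m = m') {X : FC Q m} {a : T Q m}
    (hx : X = Quotient.mk _ a) :
    (FG Q).castCell h X = Quotient.mk _ (castT h a) := by subst hx; exact qcast_mk h a

end FreeOmega
namespace FreeOmega

variable {Q : GlobSet}

/-- The free strict globular ω-category on a globular ω-set. -/
noncomputable def FQ (Q : GlobSet) : StrictOmegaCat where
  toGlobSet := FG Q
  id' := qid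
  id_src n x := Quotient.inductionOn x fun a => by
    refine (qsrc_eq (qid_eq rfl)).trans ?_
    exact mk_congr (Wsrc_id a.1) _ a.2
  id_tgt n x := Quotient.inductionOn x fun a => by
    refine (qtgt_eq (qid_eq rfl)).trans ?_
    exact mk_congr (Wtgt_id a.1) _ a.2
  comp p k x' x _ := qcompAux p k x' x
  comp_src_zero := by
    intro p X' X h
    revert h
    refine Quotient.inductionOn₂ X' X fun a b => ?_
    intro h
    have r := side_of rfl rfl h
    refine (qsrc_eq (qcomp_eq rfl rfl r)).trans ?_
    refine Eq.trans ?_ (qsrc_eq rfl).symm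
    exact mk_congr (Wsrc_comp_zero p a.1 b.1) _ _
  comp_tgt_zero := by
    intro p X' X h
    revert h
    refine Quotient.inductionOn₂ X' X fun a b => ?_
    intro h
    have r := side_of rfl rfl h
    refine (qtgt_eq (qcomp_eq rfl rfl r)).trans ?_
    refine Eq.trans ?_ (qtgt_eq rfl).symm
    exact mk_congr (Wtgt_comp_zero p a.1 b.1) _ _
  comp_src_succ := by
    intro p k X' X h h'
    revert h h'
    refine Quotient.inductionOn₂ X' X fun a b => ?_
    intro h h'
    have r := side_of rfl rfl h
    have r' := side_of rfl rfl h'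
    refine (qsrc_eq (qcomp_eq rfl rfl r)).trans ?_
    refine Eq.trans ?_ (qcomp_eq rfl rfl r').symm
    exact mk_congr (Wsrc_comp_succ p k a.1 b.1) _ _
  comp_tgt_succ := by
    intro p k X' X h h'
    revert h h'
    refine Quotient.inductionOn₂ X' X fun a b => ?_
    intro h h'
    have r := side_of rfl rfl h
    have r' := side_of rfl rfl h'
    refine (qtgt_eq (qcomp_eq rfl rfl r)).trans ?_
    refine Eq.trans ?_ (qcomp_eq rfl rfl r').symm
    exact mk_congr (Wtgt_comp_succ p k a.1 b.1) _ _
  comp_assoc := by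
    intro p k Z Y X hzy hyx hl hr
    revert hzy hyx hl hr
    refine Quotient.inductionOn₂ Z Y fun z y => ?_
    refine Quotient.inductionOn X fun x => ?_
    intro hzy hyx hl hr
    have rzy := side_of rfl rfl hzy
    have ryx := side_of rfl rfl hyx
    have rl := side_of (qcomp_eq rfl rfl rzy) rfl hl
    have rr := side_of rfl (qcomp_eq rfl rfl ryx) hr
    refine (qcomp_eq (qcomp_eq rfl rfl rzy) rfl rl).trans ?_
    refine Eq.trans ?_ (qcomp_eq rfl (qcomp_eq rfl rfl ryx) rr).symm
    exact mk_sound (R.assoc z.2 y.2 x.2 rzy ryx)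
  comp_unit_left := by
    intro p k X h
    revert h
    refine Quotient.inductionOn X fun a => ?_
    intro h
    have hs : R (WsrcIter (k+1) (WiterId (k+1) (WtgtIter (k+1) a.1))) (WtgtIter (k+1) a.1) := by
      rw [WsrcIter_iterId]
      exact R.tgtIterR (k+1) a.2
    refine (qcomp_eq (qiterId_eq (k+1) (qtgtIter_eq (k+1) rfl)) rfl hs).trans ?_
    exact mk_sound (R.unitL a.2)
  comp_unit_right := by
    intro p k X h
    revert h
    refine Quotient.inductionOn X fun a => ?_
    intro h
    have hs : R (WsrcIter (k+1) a.1) (WtgtIter (k+1) (WiterId (k+1) (WsrcIter (k+1) a.1))) := by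
      rw [WtgtIter_iterId]
      exact R.srcIterR (k+1) a.2
    refine (qcomp_eq rfl (qiterId_eq (k+1) (qsrcIter_eq (k+1) rfl)) hs).trans ?_
    exact mk_sound (R.unitR a.2)
  id_comp' := by
    intro p k X' X h h'
    revert h h'
    refine Quotient.inductionOn₂ X' X fun a b => ?_
    intro h h'
    have r := side_of rfl rfl h
    have r' : R (WsrcIter (k+1+1) (W.id' a.1)) (WtgtIter (k+1+1) (W.id' b.1)) := by
      rw [WsrcIter_succ, Wsrc_id, WtgtIter_succ, Wtgt_id]
      exact r
    refine (qid_eq (qcomp_eq rfl rfl r)).trans ?_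
    refine Eq.trans ?_ (qcomp_eq (p := p) (k := k+1) (qid_eq rfl) (qid_eq rfl) r').symm
    exact mk_sound (R.idComp a.2 b.2 r)
  exchange := by
    intro q d k j he Y' Y X' X h1 h2 h3 h4 h5 h6
    revert h1 h2 h3 h4 h5 h6
    refine Quotient.inductionOn₂ Y' Y fun ya yb => ?_
    refine Quotient.inductionOn₂ X' X fun xa xb => ?_
    intro h1 h2 h3 h4 h5 h6
    have r1 := side_of rfl rfl h1
    have r2 := side_of rfl rfl h2
    have r3 := side_of (qcast_eq he (qcomp_eq rfl rfl r1)) (qcast_eq he (qcomp_eq rfl rfl r2)) h3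
    have r4 := side_of (qcast_eq he rfl) (qcast_eq he rfl) h4
    have r5 := side_of (qcast_eq he rfl) (qcast_eq he rfl) h5
    have r6 := side_of
      (qcast_eq he.symm (qcomp_eq (qcast_eq he rfl) (qcast_eq he rfl) r4))
      (qcast_eq he.symm (qcomp_eq (qcast_eq he rfl) (qcast_eq he rfl) r5)) h6
    refine (qcomp_eq (qcast_eq he (qcomp_eq rfl rfl r1))
      (qcast_eq he (qcomp_eq rfl rfl r2)) r3).trans ?_
    refine Eq.trans ?_ (qcast_eq he (qcomp_eq
      (qcast_eq he.symm (qcomp_eq (qcast_eq he rfl) (qcast_eq he rfl) r4))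
      (qcast_eq he.symm (qcomp_eq (qcast_eq he rfl) (qcast_eq he rfl) r5)) r6)).symm
    exact mk_sound (R.exch he ya.2 yb.2 xa.2 xb.2 r1 r2 r3 r4 r5 r6)

end FreeOmega
namespace FreeOmega

/-- Globular lemma: iterated target of a source. -/
theorem g_tgtIter_src (G : GlobSet) (k : ℕ) {n : ℕ} (x : G.cells (n+(k+1)+1)) :
    G.tgtIter (k+1) (G.src _ x) = G.tgtIter (k+2) x := by
  show G.tgtIter k (G.tgt _ (G.src _ x)) = G.tgtIter k (G.tgt _ (G.tgt _ x))
  rw [G.glob_tt]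

theorem g_srcIter_tgt (G : GlobSet) (k : ℕ) {n : ℕ} (x : G.cells (n+(k+1)+1)) :
    G.srcIter (k+1) (G.tgt _ x) = G.srcIter (k+2) x := by
  show G.srcIter k (G.src _ (G.tgt _ x)) = G.srcIter k (G.src _ (G.src _ x))
  rw [G.glob_ss]

variable {Q : GlobSet} (C : StrictOmegaCat)

theorem c_srcIter_iterId : ∀ (k : ℕ) {n : ℕ} (z : C.toGlobSet.cells n),
    C.toGlobSet.srcIter k (iterId C.toGlobSet.cells C.id' k z) = z
  | 0, _, _ => rfl
  | k+1, n, z => by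
      show C.toGlobSet.srcIter k
        (C.toGlobSet.src _ (C.id' _ (iterId C.toGlobSet.cells C.id' k z))) = z
      rw [C.id_src]
      exact c_srcIter_iterId k z

theorem c_tgtIter_iterId : ∀ (k : ℕ) {n : ℕ} (z : C.toGlobSet.cells n),
    C.toGlobSet.tgtIter k (iterId C.toGlobSet.cells C.id' k z) = z
  | 0, _, _ => rfl
  | k+1, n, z => by
      show C.toGlobSet.tgtIter k
        (C.toGlobSet.tgt _ (C.id' _ (iterId C.toGlobSet.cells C.id' k z))) = z
      rw [C.id_tgt]
      exact c_tgtIter_iterId k z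

theorem c_srcIter_comp : ∀ (k p : ℕ) (a b : C.toGlobSet.cells (p+(k+1)))
    (h : C.toGlobSet.srcIter (k+1) a = C.toGlobSet.tgtIter (k+1) b),
    C.toGlobSet.srcIter (k+1) (C.comp p k a b h) = C.toGlobSet.srcIter (k+1) b
  | 0, p, a, b, h => C.comp_src_zero p a b h
  | k+1, p, a, b, h => by
      have h' : C.toGlobSet.srcIter (k+1) (C.toGlobSet.src _ a)
          = C.toGlobSet.tgtIter (k+1) (C.toGlobSet.src _ b) := by
        rw [g_tgtIter_src]
        exact h
      show C.toGlobSet.srcIter (k+1) (C.toGlobSet.src _ (C.comp p (k+1) a b h))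
          = C.toGlobSet.srcIter (k+1) (C.toGlobSet.src _ b)
      rw [C.comp_src_succ p k a b h h']
      exact c_srcIter_comp k p _ _ h'

theorem c_tgtIter_comp : ∀ (k p : ℕ) (a b : C.toGlobSet.cells (p+(k+1)))
    (h : C.toGlobSet.srcIter (k+1) a = C.toGlobSet.tgtIter (k+1) b),
    C.toGlobSet.tgtIter (k+1) (C.comp p k a b h) = C.toGlobSet.tgtIter (k+1) a
  | 0, p, a, b, h => C.comp_tgt_zero p a b h
  | k+1, p, a, b, h => by
      have h' : C.toGlobSet.srcIter (k+1) (C.toGlobSet.tgt _ a)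
          = C.toGlobSet.tgtIter (k+1) (C.toGlobSet.tgt _ b) := by
        rw [g_srcIter_tgt]
        exact h
      show C.toGlobSet.tgtIter (k+1) (C.toGlobSet.tgt _ (C.comp p (k+1) a b h))
          = C.toGlobSet.tgtIter (k+1) (C.toGlobSet.tgt _ a)
      rw [C.comp_tgt_succ p k a b h h']
      exact c_tgtIter_comp k p _ _ h'

/-- The evaluation relation: `E C φ w c` means the term `w` evaluates to the cell `c`
under the extension of `φ`. -/
inductive E (C : StrictOmegaCat) (φ : GlobHom Q C.toGlobSet) :
    ∀ {n : ℕ}, W Q n → C.toGlobSet.cells n → Prop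
  | gen {n : ℕ} (x : Q.cells n) : E C φ (.gen x) (φ.app n x)
  | id' {n : ℕ} {w : W Q n} {c : C.toGlobSet.cells n} :
      E C φ w c → R w w → E C φ (.id' w) (C.id' n c)
  | comp {p k : ℕ} {u v : W Q (p+(k+1))} {c d : C.toGlobSet.cells (p+(k+1))} :
      E C φ u c → E C φ v d → R u u → R v v →
      R (WsrcIter (k+1) u) (WtgtIter (k+1) v) →
      (h : C.toGlobSet.srcIter (k+1) c = C.toGlobSet.tgtIter (k+1) d) →
      E C φ (.comp p k u v) (C.comp p k c d h)

variable {C} {φ : GlobHom Q C.toGlobSet}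

theorem E_src_aux : ∀ (N : ℕ) {n : ℕ} {w : W Q (n+1)} {c : C.toGlobSet.cells (n+1)},
    sizeOf w < N → E C φ w c → E C φ (Wsrc w) (C.toGlobSet.src n c) := by
  intro N
  induction N with
  | zero => exact fun h _ => absurd h (Nat.not_lt_zero _)
  | succ N ih =>
  intro n w c hN h
  cases h with
  | gen x =>
      rw [Wsrc_gen, φ.app_src]
      exact E.gen _
  | id' hw hr =>
      rw [Wsrc_id, C.id_src]
      exact hw
  | @comp p k u v c d Eu Ev hu hv hR hC =>
      cases k with
      | zero =>
          show E C φ (Wsrc (W.comp p 0 u v)) (C.toGlobSet.src p (C.comp p 0 c d hC))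
          rw [Wsrc_comp_zero, C.comp_src_zero p c d hC]
          exact ih (by have := hN; simp at this ⊢; omega) Ev
      | succ k =>
          have h' : C.toGlobSet.srcIter (k+1) (C.toGlobSet.src _ c)
              = C.toGlobSet.tgtIter (k+1) (C.toGlobSet.src _ d) := by
            rw [g_tgtIter_src]
            exact hC
          show E C φ (Wsrc (W.comp p (k+1) u v))
            (C.toGlobSet.src (p+(k+1)) (C.comp p (k+1) c d hC))
          rw [Wsrc_comp_succ, C.comp_src_succ p k c d hC h']
          exact E.comp (ih (by have := hN; simp at this ⊢; omega) Eu)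
            (ih (by have := hN; simp at this ⊢; omega) Ev) hu.srcR hv.srcR
            (hR.trans (R.tgtIter_src hv).symm) h'

theorem E_src {n : ℕ} {w : W Q (n+1)} {c : C.toGlobSet.cells (n+1)}
    (h : E C φ w c) : E C φ (Wsrc w) (C.toGlobSet.src n c) :=
  E_src_aux (sizeOf w + 1) (Nat.lt_succ_self _) h

theorem E_tgt_aux : ∀ (N : ℕ) {n : ℕ} {w : W Q (n+1)} {c : C.toGlobSet.cells (n+1)},
    sizeOf w < N → E C φ w c → E C φ (Wtgt w) (C.toGlobSet.tgt n c) := by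
  intro N
  induction N with
  | zero => exact fun h _ => absurd h (Nat.not_lt_zero _)
  | succ N ih =>
  intro n w c hN h
  cases h with
  | gen x =>
      rw [Wtgt_gen, φ.app_tgt]
      exact E.gen _
  | id' hw hr =>
      rw [Wtgt_id, C.id_tgt]
      exact hw
  | @comp p k u v c d Eu Ev hu hv hR hC =>
      cases k with
      | zero =>
          show E C φ (Wtgt (W.comp p 0 u v)) (C.toGlobSet.tgt p (C.comp p 0 c d hC))
          rw [Wtgt_comp_zero, C.comp_tgt_zero p c d hC]
          exact ih (by have := hN; simp at this ⊢; omega) Eu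
      | succ k =>
          have h' : C.toGlobSet.srcIter (k+1) (C.toGlobSet.tgt _ c)
              = C.toGlobSet.tgtIter (k+1) (C.toGlobSet.tgt _ d) := by
            rw [g_srcIter_tgt]
            exact hC
          show E C φ (Wtgt (W.comp p (k+1) u v))
            (C.toGlobSet.tgt (p+(k+1)) (C.comp p (k+1) c d hC))
          rw [Wtgt_comp_succ, C.comp_tgt_succ p k c d hC h']
          exact E.comp (ih (by have := hN; simp at this ⊢; omega) Eu)
            (ih (by have := hN; simp at this ⊢; omega) Ev) hu.tgtR hv.tgtR
            ((R.srcIter_tgt hu).trans hR) h'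

theorem E_tgt {n : ℕ} {w : W Q (n+1)} {c : C.toGlobSet.cells (n+1)}
    (h : E C φ w c) : E C φ (Wtgt w) (C.toGlobSet.tgt n c) :=
  E_tgt_aux (sizeOf w + 1) (Nat.lt_succ_self _) h

theorem E_srcIter : ∀ (k : ℕ) {n : ℕ} {w : W Q (n+k)} {c : C.toGlobSet.cells (n+k)},
    E C φ w c → E C φ (WsrcIter k w) (C.toGlobSet.srcIter k c)
  | 0, _, _, _, h => h
  | k+1, _, _, _, h => E_srcIter k (E_src h)

theorem E_tgtIter : ∀ (k : ℕ) {n : ℕ} {w : W Q (n+k)} {c : C.toGlobSet.cells (n+k)},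
    E C φ w c → E C φ (WtgtIter k w) (C.toGlobSet.tgtIter k c)
  | 0, _, _, _, h => h
  | k+1, _, _, _, h => E_tgtIter k (E_tgt h)

theorem E_iterId : ∀ (k : ℕ) {n : ℕ} {w : W Q n} {c : C.toGlobSet.cells n},
    E C φ w c → R w w → E C φ (WiterId k w) (iterId C.toGlobSet.cells C.id' k c)
  | 0, _, _, _, h, _ => h
  | k+1, _, _, _, h, hr => E.id' (E_iterId k h hr) (R.iterIdR k hr)

theorem E_cast {m m' : ℕ} (he : m = m') {w : W Q m} {c : C.toGlobSet.cells m}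
    (h : E C φ w c) : E C φ (Wcast he w) (C.toGlobSet.castCell he c) := by
  subst he; exact h

open Classical in
/-- A partial evaluation function on terms. -/
noncomputable def ev (C : StrictOmegaCat) (φ : GlobHom Q C.toGlobSet) :
    ∀ {n : ℕ}, W Q n → Option (C.toGlobSet.cells n)
  | _, .gen x => some (φ.app _ x)
  | _, .id' w => (ev C φ w).map (C.id' _)
  | _, .comp p k u v =>
      match ev C φ u, ev C φ v with
      | some c, some d =>
          if h : C.toGlobSet.srcIter (k+1) c = C.toGlobSet.tgtIter (k+1) d
          then some (C.comp p k c d h) else none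
      | _, _ => none

theorem E_ev {n : ℕ} {w : W Q n} {c : C.toGlobSet.cells n} (h : E C φ w c) :
    ev C φ w = some c := by
  induction h with
  | gen x => simp [ev]
  | id' hw hr ih => simp [ev, ih]
  | comp Eu Ev hu hv hR hC ihu ihv =>
      simp only [ev, ihu, ihv]
      rw [dif_pos hC]

/-- The evaluation relation is functional. -/
theorem E_fun {n : ℕ} {w : W Q n} {c : C.toGlobSet.cells n} (h : E C φ w c)
    {c' : C.toGlobSet.cells n} (h' : E C φ w c') : c = c' := by
  have := (E_ev h).symm.trans (E_ev h')
  exact Option.some_injective _ this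

end FreeOmega
namespace FreeOmega

variable {Q : GlobSet} {C : StrictOmegaCat} {φ : GlobHom Q C.toGlobSet}

/-- Every pair of related terms evaluates to a common cell. -/
theorem E_total {n : ℕ} {a b : W Q n} (h : R a b) : ∃ c, E C φ a c ∧ E C φ b c := by
  induction h with
  | gen x => exact ⟨φ.app _ x, E.gen x, E.gen x⟩
  | symm h ih =>
      obtain ⟨c, h1, h2⟩ := ih
      exact ⟨c, h2, h1⟩
  | trans h1 h2 ih1 ih2 =>
      obtain ⟨c, ha, hb⟩ := ih1
      obtain ⟨c', hb', hc'⟩ := ih2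
      exact ⟨c, ha, (E_fun hb' hb) ▸ hc'⟩
  | srcR h ih =>
      obtain ⟨c, h1, h2⟩ := ih
      exact ⟨_, E_src h1, E_src h2⟩
  | tgtR h ih =>
      obtain ⟨c, h1, h2⟩ := ih
      exact ⟨_, E_tgt h1, E_tgt h2⟩
  | glob_s h ih =>
      obtain ⟨c, h1, h2⟩ := ih
      refine ⟨_, E_src (E_src h1), ?_⟩
      rw [C.toGlobSet.glob_ss]
      exact E_src (E_tgt h2)
  | glob_t h ih =>
      obtain ⟨c, h1, h2⟩ := ih
      refine ⟨_, E_tgt (E_src h1), ?_⟩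
      rw [C.toGlobSet.glob_tt]
      exact E_tgt (E_tgt h2)
  | idCongr h ih =>
      obtain ⟨c, h1, h2⟩ := ih
      exact ⟨_, E.id' h1 h.reflL, E.id' h2 h.reflR⟩
  | @compCongr p k a a' b b' ha hb hs iha ihb ihs =>
      obtain ⟨c, Ea, Ea'⟩ := iha
      obtain ⟨d, Eb, Eb'⟩ := ihb
      obtain ⟨e, es, et⟩ := ihs
      have hC : C.toGlobSet.srcIter (k+1) c = C.toGlobSet.tgtIter (k+1) d :=
        (E_fun (E_srcIter (k+1) Ea) es).trans (E_fun (E_tgtIter (k+1) Eb) et).symm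
      exact ⟨C.comp p k c d hC,
        E.comp Ea Eb ha.reflL hb.reflL hs hC,
        E.comp Ea' Eb' ha.reflR hb.reflR
          (((R.srcIterR (k+1) ha.symm).trans hs).trans (R.tgtIterR (k+1) hb)) hC⟩
  | @assoc p k z y x hz hy hx hzy hyx ihz ihy ihx ihzy ihyx =>
      obtain ⟨cz, Ez, -⟩ := ihz
      obtain ⟨cy, Ey, -⟩ := ihy
      obtain ⟨cx, Ex, -⟩ := ihx
      obtain ⟨e1, s1, t1⟩ := ihzy
      obtain ⟨e2, s2, t2⟩ := ihyx
      have hCzy : C.toGlobSet.srcIter (k+1) cz = C.toGlobSet.tgtIter (k+1) cy :=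
        (E_fun (E_srcIter (k+1) Ez) s1).trans (E_fun (E_tgtIter (k+1) Ey) t1).symm
      have hCyx : C.toGlobSet.srcIter (k+1) cy = C.toGlobSet.tgtIter (k+1) cx :=
        (E_fun (E_srcIter (k+1) Ey) s2).trans (E_fun (E_tgtIter (k+1) Ex) t2).symm
      have hL : C.toGlobSet.srcIter (k+1) (C.comp p k cz cy hCzy)
          = C.toGlobSet.tgtIter (k+1) cx := (c_srcIter_comp C k p cz cy hCzy).trans hCyx
      have hR' : C.toGlobSet.srcIter (k+1) cz
          = C.toGlobSet.tgtIter (k+1) (C.comp p k cy cx hCyx) :=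
        hCzy.trans (c_tgtIter_comp C k p cy cx hCyx).symm
      refine ⟨_, E.comp (E.comp Ez Ey hz hy hzy hCzy) Ex (R.compCongr hz hy hzy) hx
        (by rw [WsrcIter_comp]; exact hyx) hL, ?_⟩
      rw [C.comp_assoc p k cz cy cx hCzy hCyx hL hR']
      exact E.comp Ez (E.comp Ey Ex hy hx hyx hCyx) hz (R.compCongr hy hx hyx)
        (by rw [WtgtIter_comp]; exact hzy) hR'
  | @unitL p k x hx ihx =>
      obtain ⟨cx, Ex, -⟩ := ihx
      have hC : C.toGlobSet.srcIter (k+1)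
            (iterId C.toGlobSet.cells C.id' (k+1) (C.toGlobSet.tgtIter (k+1) cx))
          = C.toGlobSet.tgtIter (k+1) cx := c_srcIter_iterId C (k+1) _
      refine ⟨cx, ?_, Ex⟩
      have := E.comp (E_iterId (k+1) (E_tgtIter (k+1) Ex) (R.tgtIterR (k+1) hx)) Ex
        (R.iterIdR (k+1) (R.tgtIterR (k+1) hx)) hx
        (by rw [WsrcIter_iterId]; exact R.tgtIterR (k+1) hx) hC
      rwa [C.comp_unit_left p k cx hC] at this
  | @unitR p k x hx ihx =>
      obtain ⟨cx, Ex, -⟩ := ihx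
      have hC : C.toGlobSet.srcIter (k+1) cx
          = C.toGlobSet.tgtIter (k+1)
              (iterId C.toGlobSet.cells C.id' (k+1) (C.toGlobSet.srcIter (k+1) cx)) :=
        (c_tgtIter_iterId C (k+1) _).symm
      refine ⟨cx, ?_, Ex⟩
      have := E.comp Ex (E_iterId (k+1) (E_srcIter (k+1) Ex) (R.srcIterR (k+1) hx))
        hx (R.iterIdR (k+1) (R.srcIterR (k+1) hx))
        (by rw [WtgtIter_iterId]; exact R.srcIterR (k+1) hx) hC
      rwa [C.comp_unit_right p k cx hC] at this
  | @idComp p k a b ha hb hs iha ihb ihs =>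
      obtain ⟨ca, Ea, -⟩ := iha
      obtain ⟨cb, Eb, -⟩ := ihb
      obtain ⟨e, es, et⟩ := ihs
      have hC : C.toGlobSet.srcIter (k+1) ca = C.toGlobSet.tgtIter (k+1) cb :=
        (E_fun (E_srcIter (k+1) Ea) es).trans (E_fun (E_tgtIter (k+1) Eb) et).symm
      have hC' : C.toGlobSet.srcIter (k+1+1) (C.id' _ ca)
          = C.toGlobSet.tgtIter (k+1+1) (C.id' _ cb) := by
        show C.toGlobSet.srcIter (k+1) (C.toGlobSet.src _ (C.id' _ ca))
          = C.toGlobSet.tgtIter (k+1) (C.toGlobSet.tgt _ (C.id' _ cb))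
        rw [C.id_src, C.id_tgt]
        exact hC
      refine ⟨_, E.id' (E.comp Ea Eb ha hb hs hC) (R.compCongr ha hb hs), ?_⟩
      rw [C.id_comp' p k ca cb hC hC']
      exact E.comp (p := p) (k := k+1) (E.id' Ea ha) (E.id' Eb hb) ha.idCongr hb.idCongr
        (by rw [WsrcIter_succ, Wsrc_id, WtgtIter_succ, Wtgt_id]; exact hs) hC'
  | @exch q d k j he y' y x' x hy' hy hx' hx h1 h2 h3 h4 h5 h6
      ihy' ihy ihx' ihx ih1 ih2 ih3 ih4 ih5 ih6 =>
      obtain ⟨cy', Ey', -⟩ := ihy'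
      obtain ⟨cy, Ey, -⟩ := ihy
      obtain ⟨cx', Ex', -⟩ := ihx'
      obtain ⟨cx, Ex, -⟩ := ihx
      obtain ⟨e1, s1, t1⟩ := ih1
      obtain ⟨e2, s2, t2⟩ := ih2
      have hc1 : C.toGlobSet.srcIter (k+1) cy' = C.toGlobSet.tgtIter (k+1) cy :=
        (E_fun (E_srcIter (k+1) Ey') s1).trans (E_fun (E_tgtIter (k+1) Ey) t1).symm
      have hc2 : C.toGlobSet.srcIter (k+1) cx' = C.toGlobSet.tgtIter (k+1) cx :=
        (E_fun (E_srcIter (k+1) Ex') s2).trans (E_fun (E_tgtIter (k+1) Ex) t2).symm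
      have Ecy := E.comp Ey' Ey hy' hy h1 hc1
      have Ecx := E.comp Ex' Ex hx' hx h2 hc2
      obtain ⟨e3, s3, t3⟩ := ih3
      have hc3 : C.toGlobSet.srcIter (j+1) (C.toGlobSet.castCell he
            (C.comp (q+(d+1)) k cy' cy hc1))
          = C.toGlobSet.tgtIter (j+1) (C.toGlobSet.castCell he
            (C.comp (q+(d+1)) k cx' cx hc2)) :=
        (E_fun (E_srcIter (j+1) (E_cast he Ecy)) s3).trans
          (E_fun (E_tgtIter (j+1) (E_cast he Ecx)) t3).symm
      obtain ⟨e4, s4, t4⟩ := ih4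
      have hc4 : C.toGlobSet.srcIter (j+1) (C.toGlobSet.castCell he cy')
          = C.toGlobSet.tgtIter (j+1) (C.toGlobSet.castCell he cx') :=
        (E_fun (E_srcIter (j+1) (E_cast he Ey')) s4).trans
          (E_fun (E_tgtIter (j+1) (E_cast he Ex')) t4).symm
      obtain ⟨e5, s5, t5⟩ := ih5
      have hc5 : C.toGlobSet.srcIter (j+1) (C.toGlobSet.castCell he cy)
          = C.toGlobSet.tgtIter (j+1) (C.toGlobSet.castCell he cx) :=
        (E_fun (E_srcIter (j+1) (E_cast he Ey)) s5).trans
          (E_fun (E_tgtIter (j+1) (E_cast he Ex)) t5).symm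
      have Emy := E.comp (E_cast he Ey') (E_cast he Ex') (R.castR he hy') (R.castR he hx')
        h4 hc4
      have Emx := E.comp (E_cast he Ey) (E_cast he Ex) (R.castR he hy) (R.castR he hx)
        h5 hc5
      obtain ⟨e6, s6, t6⟩ := ih6
      have hc6 : C.toGlobSet.srcIter (k+1) (C.toGlobSet.castCell he.symm
            (C.comp q j (C.toGlobSet.castCell he cy') (C.toGlobSet.castCell he cx') hc4))
          = C.toGlobSet.tgtIter (k+1) (C.toGlobSet.castCell he.symm
            (C.comp q j (C.toGlobSet.castCell he cy) (C.toGlobSet.castCell he cx) hc5)) :=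
        (E_fun (E_srcIter (k+1) (E_cast he.symm Emy)) s6).trans
          (E_fun (E_tgtIter (k+1) (E_cast he.symm Emx)) t6).symm
      refine ⟨_, E.comp (E_cast he Ecy) (E_cast he Ecx)
        (R.castR he (R.compCongr hy' hy h1)) (R.castR he (R.compCongr hx' hx h2))
        h3 hc3, ?_⟩
      rw [C.exchange q d k j he cy' cy cx' cx hc1 hc2 hc3 hc4 hc5 hc6]
      exact E_cast he (E.comp (E_cast he.symm Emy) (E_cast he.symm Emx)
        (R.castR he.symm (R.compCongr (R.castR he hy') (R.castR he hx') h4))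
        (R.castR he.symm (R.compCongr (R.castR he hy) (R.castR he hx) h5))
        h6 hc6)

end FreeOmega
namespace FreeOmega

theorem comp_hcongr (C : StrictOmegaCat) {p k : ℕ} {a a' b b' : C.toGlobSet.cells (p+(k+1))}
    {h : C.toGlobSet.srcIter (k+1) a = C.toGlobSet.tgtIter (k+1) b}
    {h' : C.toGlobSet.srcIter (k+1) a' = C.toGlobSet.tgtIter (k+1) b'}
    (ea : a = a') (eb : b = b') : C.comp p k a b h = C.comp p k a' b' h' := by
  subst ea; subst eb; rfl

variable {Q : GlobSet} (C : StrictOmegaCat) (φ : GlobHom Q C.toGlobSet)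

/-- Evaluation of a well-formed term. -/
noncomputable def evalT {n : ℕ} (a : T Q n) : C.toGlobSet.cells n :=
  (E_total (C := C) (φ := φ) a.2).choose

theorem evalT_spec {n : ℕ} (a : T Q n) : E C φ a.1 (evalT C φ a) :=
  (E_total (C := C) (φ := φ) a.2).choose_spec.1

/-- Evaluation of a cell of the free ω-category. -/
noncomputable def evalQ (n : ℕ) : FC Q n → C.toGlobSet.cells n :=
  Quotient.lift (evalT C φ) (fun a b h => by
    obtain ⟨c, h1, h2⟩ := E_total (C := C) (φ := φ) h
    exact (E_fun (evalT_spec C φ a) h1).trans (E_fun h2 (evalT_spec C φ b)))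

theorem evalQ_eq {n : ℕ} {X : FC Q n} {a : T Q n} (hx : X = Quotient.mk _ a)
    {c : C.toGlobSet.cells n} (hc : E C φ a.1 c) : evalQ C φ n X = c := by
  subst hx
  exact E_fun (evalT_spec C φ a) hc

/-- The underlying globular morphism of the induced ω-functor. -/
noncomputable def hatHom : GlobHom (FG Q) C.toGlobSet where
  app := evalQ C φ
  app_src n x := Quotient.inductionOn x fun a =>
    (evalQ_eq C φ rfl (E_src (evalT_spec C φ a))).symm
  app_tgt n x := Quotient.inductionOn x fun a =>
    (evalQ_eq C φ rfl (E_tgt (evalT_spec C φ a))).symm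

/-- The induced ω-functor out of the free ω-category. -/
noncomputable def hatF : StrictFunctor (FQ Q) C where
  toGlobHom := hatHom C φ
  map_id n x := Quotient.inductionOn x fun a =>
    evalQ_eq C φ rfl (E.id' (evalT_spec C φ a) a.2)
  map_comp := by
    intro p k X' X h h'
    revert h h'
    refine Quotient.inductionOn₂ X' X fun a b => ?_
    intro h h'
    have r := side_of rfl rfl h
    exact evalQ_eq C φ (qcomp_eq rfl rfl r)
      (E.comp (evalT_spec C φ a) (evalT_spec C φ b) a.2 b.2 r h')

/-- The unit of the adjunction. -/
def etaHom (Q : GlobSet) : GlobHom Q (FG Q) where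
  app n x := Quotient.mk _ (⟨W.gen x, R.gen x⟩ : T Q n)
  app_src n x := mk_congr (Wsrc_gen x) _ (R.gen _)
  app_tgt n x := mk_congr (Wtgt_gen x) _ (R.gen _)

theorem hat_unique (ψ : StrictFunctor (FQ Q) C)
    (hψ : ∀ (n : ℕ) (x : Q.cells n), ψ.toGlobHom.app n ((etaHom Q).app n x) = φ.app n x) :
    ∀ {n : ℕ} {w : W Q n} {c : C.toGlobSet.cells n}, E C φ w c →
      ∀ (hw : R w w), ψ.toGlobHom.app n (Quotient.mk _ (⟨w, hw⟩ : T Q n)) = c := by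
  intro n w c h
  induction h with
  | @gen m x =>
      intro hw
      exact hψ m x
  | @id' m w0 c0 hE hr ih =>
      intro hw
      have e := ψ.map_id m (Quotient.mk _ (⟨w0, hr⟩ : T Q m))
      rw [ih hr] at e
      exact e
  | @comp p k u v c d Eu Ev hu hv hR hC ihu ihv =>
      intro hw
      have hq : (FG Q).srcIter (k+1) (Quotient.mk _ (⟨u, hu⟩ : T Q (p+(k+1))))
          = (FG Q).tgtIter (k+1) (Quotient.mk _ (⟨v, hv⟩ : T Q (p+(k+1)))) :=
        (qsrcIter_eq (k+1) (a := ⟨u, hu⟩) rfl).trans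
          ((mk_sound hR).trans (qtgtIter_eq (k+1) (a := ⟨v, hv⟩) rfl).symm)
      have h2 : C.toGlobSet.srcIter (k+1)
            (ψ.toGlobHom.app _ (Quotient.mk _ (⟨u, hu⟩ : T Q (p+(k+1)))))
          = C.toGlobSet.tgtIter (k+1)
            (ψ.toGlobHom.app _ (Quotient.mk _ (⟨v, hv⟩ : T Q (p+(k+1))))) := by
        rw [ihu hu, ihv hv]
        exact hC
      have e := ψ.map_comp p k _ _ hq h2
      have e2 : (FQ Q).comp p k (Quotient.mk _ ⟨u, hu⟩) (Quotient.mk _ ⟨v, hv⟩) hq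
          = Quotient.mk _ (⟨W.comp p k u v, hw⟩ : T Q (p+(k+1))) := qcomp_eq rfl rfl hR
      rw [e2] at e
      rw [e]
      exact comp_hcongr C (ihu hu) (ihv hv)

/-- The universal property of the free strict ω-category. -/
theorem freeUP (Q : GlobSet) (C : StrictOmegaCat) (φ : Q ⟶ forgetStrict.obj C) :
    ∃! ψ : FQ Q ⟶ C, (etaHom Q : Q ⟶ forgetStrict.obj (FQ Q)) ≫ forgetStrict.map ψ = φ := by
  refine ⟨hatF C φ, ?_, ?_⟩
  · exact GlobHom.hext fun n x =>
      E_fun (evalT_spec C φ ⟨W.gen x, R.gen x⟩) (E.gen x)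
  · intro ψ hψ
    refine StrictFunctor.hext (GlobHom.hext fun n X => ?_)
    refine Quotient.inductionOn X fun a => ?_
    exact hat_unique C φ ψ (fun m x => GlobHom.congr_app hψ m x) (evalT_spec C φ a) a.2

/-- The free strict ω-category functor. -/
noncomputable def Ffree : GlobSet ⥤ StrictOmegaCat where
  obj := FQ
  map {Q Q'} f := (freeUP Q (FQ Q') (f ≫ etaHom Q')).exists.choose
  map_id Q := by
    refine ((freeUP Q (FQ Q) (𝟙 Q ≫ etaHom Q)).unique
      (freeUP Q (FQ Q) (𝟙 Q ≫ etaHom Q)).exists.choose_spec ?_)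
    show (etaHom Q : Q ⟶ forgetStrict.obj (FQ Q)) ≫ forgetStrict.map (𝟙 (FQ Q)) = 𝟙 Q ≫ (etaHom Q : Q ⟶ forgetStrict.obj (FQ Q))
    exact Category.comp_id _
  map_comp {X Y Z} f g := by
    refine ((freeUP X (FQ Z) ((f ≫ g) ≫ etaHom Z)).unique
      (freeUP X (FQ Z) ((f ≫ g) ≫ etaHom Z)).exists.choose_spec ?_)
    have hf := (freeUP X (FQ Y) (f ≫ etaHom Y)).exists.choose_spec
    have hg := (freeUP Y (FQ Z) (g ≫ etaHom Z)).exists.choose_spec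
    rw [Functor.map_comp]
    exact GlobHom.hext fun n x =>
      (congrArg (GlobHom.app (forgetStrict.map _) n) (GlobHom.congr_app hf n x)).trans
        (GlobHom.congr_app hg n (f.app n x))

end FreeOmega
/-- The forgetful functor `U : Cf ⥤ Qf` from strict globular ω-categories
to globular ω-sets admits a left adjoint `F`, the free strict globular ω-category functor:
for every globular ω-set `Q` there is a morphism of globular ω-sets `η_Q : Q ⟶ U(F(Q))`
such that for every morphism of globular ω-sets `φ : Q ⟶ U(Ĉ)` into the underlying
globular ω-set of a strict globular ω-category `Ĉ` there exists a unique ω-functor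
`φ̂ : F(Q) ⟶ Ĉ` with `φ = U(φ̂) ∘ η_Q`. -/
theorem free_strict_omega_category :
    ∃ (F : GlobSet ⥤ StrictOmegaCat) (η : ∀ Q : GlobSet, Q ⟶ forgetStrict.obj (F.obj Q)),
      ∀ (Q : GlobSet) (C : StrictOmegaCat) (φ : Q ⟶ forgetStrict.obj C),
        ∃! φhat : F.obj Q ⟶ C, η Q ≫ forgetStrict.map φhat = φ := by
  refine ⟨FreeOmega.Ffree, fun Q => (FreeOmega.etaHom Q :
    Q ⟶ forgetStrict.obj (FreeOmega.Ffree.obj Q)), ?_⟩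
  intro Q C φ
  exact FreeOmega.freeUP Q C φ
end

section
/- The unit η : Id_{Qf} ⇒ U ∘ F of the free strict globular ω-category adjunction F ⊣ U is a Cartesian natural transformation: for every morphism φ : Q₁ → Q₂ of globular ω-sets, the naturality square formed by η_{Q₁}, φ, (U∘F)(φ) and η_{Q₂} is a pullback square in Qf. -/
open CategoryTheory CategoryTheory.Limits

/-! ### Stage 1: generic lemmas about strict ω-categories -/

theorem GlobSet.tgtIter_src (Q : GlobSet) (k : ℕ) {n : ℕ} (x : Q.cells (n + (k + 2))) :
    Q.tgtIter (k + 1) (Q.src (n + (k + 1)) x) = Q.tgtIter (k + 1) (Q.tgt (n + (k + 1)) x) := by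
  show Q.tgtIter k (Q.tgt (n + k) (Q.src (n + k + 1) x))
      = Q.tgtIter k (Q.tgt (n + k) (Q.tgt (n + k + 1) x))
  rw [Q.glob_tt]

theorem GlobSet.srcIter_tgt (Q : GlobSet) (k : ℕ) {n : ℕ} (x : Q.cells (n + (k + 2))) :
    Q.srcIter (k + 1) (Q.tgt (n + (k + 1)) x) = Q.srcIter (k + 1) (Q.src (n + (k + 1)) x) := by
  show Q.srcIter k (Q.src (n + k) (Q.tgt (n + k + 1) x))
      = Q.srcIter k (Q.src (n + k) (Q.src (n + k + 1) x))
  rw [Q.glob_ss]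

namespace StrictOmegaCat

theorem srcIter_iterId (C : StrictOmegaCat) :
    ∀ (k : ℕ) {n : ℕ} (z : C.cells n),
      C.toGlobSet.srcIter k (iterId C.cells C.id' k z) = z
  | 0, _, _ => rfl
  | k + 1, n, z => by
    show C.toGlobSet.srcIter k
      (C.toGlobSet.src (n + k) (C.id' (n + k) (iterId C.cells C.id' k z))) = z
    rw [C.id_src]; exact srcIter_iterId C k z

theorem tgtIter_iterId (C : StrictOmegaCat) :
    ∀ (k : ℕ) {n : ℕ} (z : C.cells n),
      C.toGlobSet.tgtIter k (iterId C.cells C.id' k z) = z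
  | 0, _, _ => rfl
  | k + 1, n, z => by
    show C.toGlobSet.tgtIter k
      (C.toGlobSet.tgt (n + k) (C.id' (n + k) (iterId C.cells C.id' k z))) = z
    rw [C.id_tgt]; exact tgtIter_iterId C k z

/-- Iterated identities on cells below level `p`. -/
inductive IsIden (C : StrictOmegaCat) (p : ℕ) : ∀ n, C.cells n → Prop
  | base (x : C.cells p) : IsIden C p p x
  | step {n : ℕ} (x : C.cells n) : IsIden C p n x → IsIden C p (n + 1) (C.id' n x)

theorem IsIden.invert {C : StrictOmegaCat} {p n : ℕ} (h : p ≤ n) {y : C.cells (n + 1)}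
    (hy : IsIden C p (n + 1) y) :
    ∃ y₀ : C.cells n, y = C.id' n y₀ ∧ IsIden C p n y₀ := by
  cases hy with
  | base => omega
  | step x hx => exact ⟨x, rfl, hx⟩

theorem IsIden.split {C : StrictOmegaCat} {p : ℕ} :
    ∀ (k : ℕ) {n₀ : ℕ}, p ≤ n₀ → ∀ (x : C.cells (n₀ + (k + 1))),
      IsIden C p (n₀ + (k + 1)) x →
      x = iterId C.cells C.id' (k + 1) (C.toGlobSet.tgtIter (k + 1) x)
  | 0, n₀, hp, x, hx => by
    obtain ⟨x₀, rfl, _⟩ := hx.invert hp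
    show C.id' n₀ x₀ = C.id' n₀ (C.toGlobSet.tgt n₀ (C.id' n₀ x₀))
    rw [C.id_tgt]
  | k + 1, n₀, hp, x, hx => by
    obtain ⟨x₀, rfl, hx₀⟩ := hx.invert (Nat.le_add_right_of_le hp)
    have ih := IsIden.split k hp x₀ hx₀
    show C.id' (n₀ + (k + 1)) x₀
        = C.id' (n₀ + (k + 1)) (iterId C.cells C.id' (k + 1)
            (C.toGlobSet.tgtIter (k + 1) (C.toGlobSet.tgt (n₀ + (k + 1)) (C.id' (n₀ + (k + 1)) x₀))))
    rw [C.id_tgt]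
    exact congrArg _ ih

theorem IsIden.srcIter_eq_tgtIter {C : StrictOmegaCat} {p k n₀ : ℕ} (hp : p ≤ n₀)
    {x : C.cells (n₀ + (k + 1))} (hx : IsIden C p (n₀ + (k + 1)) x) :
    C.toGlobSet.srcIter (k + 1) x = C.toGlobSet.tgtIter (k + 1) x := by
  conv_lhs => rw [IsIden.split k hp x hx]
  rw [C.srcIter_iterId]

theorem IsIden.comp_closed {C : StrictOmegaCat} :
    ∀ (k'' : ℕ) {p p'' : ℕ}, p'' < p → p < p'' + (k'' + 1) →
      ∀ (x' x : C.cells (p'' + (k'' + 1))) (h : _),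
        IsIden C p (p'' + (k'' + 1)) x' → IsIden C p (p'' + (k'' + 1)) x →
        IsIden C p (p'' + (k'' + 1)) (C.comp p'' k'' x' x h)
  | 0, p, p'', h1, h2, _, _, _, _, _ => by omega
  | k'' + 1, p, p'', h1, h2, x', x, h, hx', hx => by
    obtain ⟨a', ea', ha'⟩ := hx'.invert (n := p'' + (k'' + 1)) (by omega)
    obtain ⟨a, ea, ha⟩ := hx.invert (n := p'' + (k'' + 1)) (by omega)
    subst ea'; subst ea
    have h₀ : C.toGlobSet.srcIter (k'' + 1) a' = C.toGlobSet.tgtIter (k'' + 1) a := by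
      have h1' : C.toGlobSet.srcIter (k'' + 2) (C.id' (p'' + (k'' + 1)) a')
          = C.toGlobSet.srcIter (k'' + 1) a' := by
        show C.toGlobSet.srcIter (k'' + 1)
          (C.toGlobSet.src (p'' + (k'' + 1)) (C.id' (p'' + (k'' + 1)) a')) = _
        rw [C.id_src]
      have h2' : C.toGlobSet.tgtIter (k'' + 2) (C.id' (p'' + (k'' + 1)) a)
          = C.toGlobSet.tgtIter (k'' + 1) a := by
        show C.toGlobSet.tgtIter (k'' + 1)
          (C.toGlobSet.tgt (p'' + (k'' + 1)) (C.id' (p'' + (k'' + 1)) a)) = _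
        rw [C.id_tgt]
      rw [h1', h2'] at h; exact h
    rw [← C.id_comp' p'' k'' a' a h₀ h]
    by_cases hq : p = p'' + (k'' + 1)
    · subst hq
      exact IsIden.step _ (IsIden.base _)
    · exact IsIden.step _ (IsIden.comp_closed k'' h1 (by omega) a' a h₀ ha' ha)

end StrictOmegaCat


/-! ### Stage 2: the counting model -/

/-- Pairs of multisets of `i`-cells, recording source/target generator content. -/
abbrev MPair (Q : GlobSet) (i : ℕ) : Type := Multiset (Q.cells i) × Multiset (Q.cells i)

/-- Cells of the counting model. -/
structure MCell (Q : GlobSet) (n : ℕ) : Type where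
  bd : ∀ i, i < n → MPair Q i
  top : Multiset (Q.cells n)

theorem MCell.ext' {Q : GlobSet} {n : ℕ} {x y : MCell Q n}
    (h1 : ∀ i hi, x.bd i hi = y.bd i hi) (h2 : x.top = y.top) : x = y := by
  cases x; cases y
  simp only [MCell.mk.injEq]
  exact ⟨funext fun i => funext fun hi => h1 i hi, h2⟩

/-- The underlying globular set of the counting model. -/
@[reducible] def MGlob (Q : GlobSet) : GlobSet where
  cells n := MCell Q n
  src n x := ⟨fun i hi => x.bd i (Nat.lt_succ_of_lt hi), (x.bd n (Nat.lt_succ_self n)).1⟩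
  tgt n x := ⟨fun i hi => x.bd i (Nat.lt_succ_of_lt hi), (x.bd n (Nat.lt_succ_self n)).2⟩
  glob_ss _ _ := rfl
  glob_tt _ _ := rfl

/-- Identity cell in the counting model. -/
def MCell.idc {Q : GlobSet} {n : ℕ} (x : MCell Q n) : MCell Q (n + 1) where
  bd i hi :=
    if h : i < n then x.bd i h
    else
      have hn : n = i := by omega
      (hn ▸ x.top, hn ▸ x.top)
  top := 0

theorem MCell.idc_bd_lt {Q : GlobSet} {n : ℕ} (x : MCell Q n) {i : ℕ} (h : i < n)
    (hi : i < n + 1) : x.idc.bd i hi = x.bd i h := dif_pos h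

theorem MCell.idc_bd_last {Q : GlobSet} {n : ℕ} (x : MCell Q n) (hi : n < n + 1) :
    x.idc.bd n hi = (x.top, x.top) := by
  show (if h : n < n then _ else _) = _
  rw [dif_neg (Nat.lt_irrefl n)]

/-- Composite cell in the counting model. -/
def MCell.compc {Q : GlobSet} (p k : ℕ) (x' x : MCell Q (p + (k + 1))) :
    MCell Q (p + (k + 1)) where
  bd i hi :=
    if h : i < p then x.bd i (by omega)
    else if h2 : i = p then
      (h2.symm ▸ (((x.bd p (by omega)).1, (x'.bd p (by omega)).2) : MPair Q p) : MPair Q i)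
    else x'.bd i hi + x.bd i hi
  top := x'.top + x.top

theorem MCell.compc_bd_lt {Q : GlobSet} {p k : ℕ} (x' x : MCell Q (p + (k + 1))) {i : ℕ}
    (h : i < p) (hi : i < p + (k + 1)) :
    (MCell.compc p k x' x).bd i hi = x.bd i (by omega) := dif_pos h

theorem MCell.compc_bd_mid {Q : GlobSet} {p k : ℕ} (x' x : MCell Q (p + (k + 1)))
    (hi : p < p + (k + 1)) :
    (MCell.compc p k x' x).bd p hi = ((x.bd p hi).1, (x'.bd p hi).2) := by
  show (if h : p < p then _ else if h2 : p = p then _ else _) = _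
  rw [dif_neg (Nat.lt_irrefl p), dif_pos rfl]

theorem MCell.compc_bd_gt {Q : GlobSet} {p k : ℕ} (x' x : MCell Q (p + (k + 1))) {i : ℕ}
    (h : p < i) (hi : i < p + (k + 1)) :
    (MCell.compc p k x' x).bd i hi = x'.bd i hi + x.bd i hi := by
  show (if h : i < p then _ else if h2 : i = p then _ else _) = _
  rw [dif_neg (by omega), dif_neg (by omega)]

theorem MGlob_srcIter_succ (Q : GlobSet) :
    ∀ (k : ℕ) {n : ℕ} (x : MCell Q (n + (k + 1))),
      (MGlob Q).srcIter (k + 1) (x : (MGlob Q).cells (n + (k + 1)))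
        = MCell.mk (fun i hi => x.bd i (by omega)) (x.bd n (by omega)).1
  | 0, n, x => rfl
  | k + 1, n, x => by
    show (MGlob Q).srcIter (k + 1) ((MGlob Q).src (n + (k + 1)) x) = _
    rw [MGlob_srcIter_succ Q k ((MGlob Q).src (n + (k + 1)) x)]

theorem MGlob_tgtIter_succ (Q : GlobSet) :
    ∀ (k : ℕ) {n : ℕ} (x : MCell Q (n + (k + 1))),
      (MGlob Q).tgtIter (k + 1) (x : (MGlob Q).cells (n + (k + 1)))
        = MCell.mk (fun i hi => x.bd i (by omega)) (x.bd n (by omega)).2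
  | 0, n, x => rfl
  | k + 1, n, x => by
    show (MGlob Q).tgtIter (k + 1) ((MGlob Q).tgt (n + (k + 1)) x) = _
    rw [MGlob_tgtIter_succ Q k ((MGlob Q).tgt (n + (k + 1)) x)]

/-- Explicit iterated identity cell. -/
def padCell (Q : GlobSet) (p k : ℕ) (z : MCell Q p) : MCell Q (p + (k + 1)) where
  bd i hi :=
    if h : i < p then z.bd i h
    else if h2 : i = p then (h2.symm ▸ ((z.top, z.top) : MPair Q p) : MPair Q i)
    else 0
  top := 0

theorem padCell_bd_lt {Q : GlobSet} {p k : ℕ} (z : MCell Q p) {i : ℕ} (h : i < p)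
    (hi : i < p + (k + 1)) : (padCell Q p k z).bd i hi = z.bd i h := dif_pos h

theorem padCell_bd_mid {Q : GlobSet} {p k : ℕ} (z : MCell Q p) (hi : p < p + (k + 1)) :
    (padCell Q p k z).bd p hi = (z.top, z.top) := by
  show (if h : p < p then _ else if h2 : p = p then _ else _) = _
  rw [dif_neg (Nat.lt_irrefl p), dif_pos rfl]

theorem padCell_bd_gt {Q : GlobSet} {p k : ℕ} (z : MCell Q p) {i : ℕ} (h : p < i)
    (hi : i < p + (k + 1)) : (padCell Q p k z).bd i hi = 0 := by
  show (if h : i < p then _ else if h2 : i = p then _ else _) = _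
  rw [dif_neg (by omega), dif_neg (by omega)]

theorem MOmega_iterId (Q : GlobSet) :
    ∀ (k : ℕ) {p : ℕ} (z : MCell Q p),
      iterId (MGlob Q).cells (fun n x => MCell.idc x) (k + 1) z = padCell Q p k z
  | 0, p, z => by
    show MCell.idc z = padCell Q p 0 z
    refine MCell.ext' (fun i hi => ?_) rfl
    rcases Nat.lt_or_ge i p with h | h
    · rw [MCell.idc_bd_lt z h, padCell_bd_lt z h]
    · have hip : i = p := by omega
      subst hip
      rw [MCell.idc_bd_last z, padCell_bd_mid z]
  | k + 1, p, z => by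
    show MCell.idc (iterId (MGlob Q).cells (fun n x => MCell.idc x) (k + 1) z)
        = padCell Q p (k + 1) z
    rw [MOmega_iterId Q k z]
    refine MCell.ext' (fun i hi => ?_) rfl
    rcases Nat.lt_or_ge i (p + (k + 1)) with h | h
    · rw [MCell.idc_bd_lt _ h]
      rcases Nat.lt_or_ge i p with h1 | h1
      · rw [padCell_bd_lt z h1, padCell_bd_lt z h1]
      · rcases Nat.lt_or_ge i (p + 1) with h2 | h2
        · have hip : i = p := by omega
          subst hip
          rw [padCell_bd_mid z, padCell_bd_mid z]
        · rw [padCell_bd_gt z (by omega), padCell_bd_gt z (by omega)]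
    · have hip : i = p + (k + 1) := by omega
      subst hip
      rw [MCell.idc_bd_last, padCell_bd_gt z (by omega)]
      rfl

theorem MGlob_cast {Q : GlobSet} :
    ∀ {m m' : ℕ} (h : m = m') (x : MCell Q m),
      (MGlob Q).castCell h (x : (MGlob Q).cells m)
        = MCell.mk (fun i hi => x.bd i (by omega)) (h ▸ x.top) := by
  intro m m' h x; subst h; rfl

theorem mtop_cast_add {Q : GlobSet} {m m' : ℕ} (h : m = m') (a b : Multiset (Q.cells m)) :
    (h ▸ (a + b) : Multiset (Q.cells m')) = (h ▸ a) + (h ▸ b) := by subst h; rfl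

theorem MGlob_cast_bd {Q : GlobSet} {m m' : ℕ} (h : m = m') (z : MCell Q m) {i : ℕ}
    (hi : i < m') (hi' : i < m) : ((MGlob Q).castCell h z).bd i hi = z.bd i hi' := by
  subst h; rfl

theorem MGlob_cast_top {Q : GlobSet} {m m' : ℕ} (h : m = m') (z : MCell Q m) :
    ((MGlob Q).castCell h z).top = h ▸ z.top := by subst h; rfl

theorem mtop_cast_cast {Q : GlobSet} {m m' : ℕ} (h : m = m') (t : Multiset (Q.cells m')) :
    (h ▸ (h.symm ▸ t : Multiset (Q.cells m)) : Multiset (Q.cells m')) = t := by subst h; rfl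

/-- Consequences of the composability condition in the counting model. -/
theorem mcomp_cond {Q : GlobSet} {p k : ℕ} {x' x : MCell Q (p + (k + 1))}
    (h : (MGlob Q).srcIter (k + 1) (x' : (MGlob Q).cells (p + (k + 1)))
        = (MGlob Q).tgtIter (k + 1) x) :
    (∀ i (hi : i < p + (k + 1)) (hip : i < p), x'.bd i hi = x.bd i hi) ∧
      (x'.bd p (by omega)).1 = (x.bd p (by omega)).2 := by
  rw [MGlob_srcIter_succ Q k x', MGlob_tgtIter_succ Q k x] at h
  have hb := congrArg MCell.bd h
  have ht := congrArg MCell.top h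
  simp only at hb ht
  constructor
  · intro i hi hip
    exact congrFun (congrFun hb i) hip
  · exact ht


theorem mcomp_unit_left (Q : GlobSet) (p k : ℕ) (x : MCell Q (p + (k + 1))) :
    MCell.compc p k
      (iterId (MGlob Q).cells (fun n x => MCell.idc x) (k + 1) ((MGlob Q).tgtIter (k + 1) x)) x
      = x := by
  rw [MOmega_iterId Q k, MGlob_tgtIter_succ Q k x]
  refine MCell.ext' (fun i hi => ?_) ?_
  · rcases Nat.lt_or_ge i p with h1 | h1
    · rw [MCell.compc_bd_lt _ x h1]
    · rcases Nat.lt_or_ge i (p + 1) with h2 | h2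
      · have : i = p := by omega
        subst this
        rw [MCell.compc_bd_mid, padCell_bd_mid]
      · rw [MCell.compc_bd_gt _ x (by omega), padCell_bd_gt _ (by omega), zero_add]
  · show (padCell Q p k _).top + x.top = x.top
    show (0 : Multiset (Q.cells (p + (k + 1)))) + x.top = x.top
    rw [zero_add]

theorem mcomp_unit_right (Q : GlobSet) (p k : ℕ) (x : MCell Q (p + (k + 1))) :
    MCell.compc p k x
      (iterId (MGlob Q).cells (fun n x => MCell.idc x) (k + 1) ((MGlob Q).srcIter (k + 1) x))
      = x := by
  rw [MOmega_iterId Q k, MGlob_srcIter_succ Q k x]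
  refine MCell.ext' (fun i hi => ?_) ?_
  · rcases Nat.lt_or_ge i p with h1 | h1
    · rw [MCell.compc_bd_lt x _ h1, padCell_bd_lt _ h1]
    · rcases Nat.lt_or_ge i (p + 1) with h2 | h2
      · have : i = p := by omega
        subst this
        rw [MCell.compc_bd_mid, padCell_bd_mid]
      · rw [MCell.compc_bd_gt x _ (by omega), padCell_bd_gt _ (by omega), add_zero]
  · show x.top + (padCell Q p k _).top = x.top
    show x.top + (0 : Multiset (Q.cells (p + (k + 1)))) = x.top
    rw [add_zero]

theorem mexchange (Q : GlobSet) (q d k j : ℕ) (he : q + (d + 1) + (k + 1) = q + (j + 1))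
    (y' y x' x : MCell Q (q + (d + 1) + (k + 1))) :
    MCell.compc q j
        ((MGlob Q).castCell he (MCell.compc (q + (d + 1)) k y' y))
        ((MGlob Q).castCell he (MCell.compc (q + (d + 1)) k x' x))
      = (MGlob Q).castCell he (MCell.compc (q + (d + 1)) k
          ((MGlob Q).castCell he.symm (MCell.compc q j
            ((MGlob Q).castCell he y') ((MGlob Q).castCell he x')))
          ((MGlob Q).castCell he.symm (MCell.compc q j
            ((MGlob Q).castCell he y) ((MGlob Q).castCell he x)))) := by
  have hj : j = d + 1 + k := by omega
  subst hj
  refine MCell.ext' (fun i hi => ?_) ?_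
  · rw [MGlob_cast_bd he (MCell.compc (q + (d + 1)) k ((MGlob Q).castCell he.symm (MCell.compc q (d + 1 + k) ((MGlob Q).castCell he y') ((MGlob Q).castCell he x'))) ((MGlob Q).castCell he.symm (MCell.compc q (d + 1 + k) ((MGlob Q).castCell he y) ((MGlob Q).castCell he x)))) hi (by omega)]
    rcases Nat.lt_or_ge i q with hq1 | hq1
    · rw [MCell.compc_bd_lt (p := q) (k := d + 1 + k) ((MGlob Q).castCell he (MCell.compc (q + (d + 1)) k y' y)) ((MGlob Q).castCell he (MCell.compc (q + (d + 1)) k x' x)) hq1 hi,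
        MGlob_cast_bd he (MCell.compc (q + (d + 1)) k x' x) _ (by omega),
        MCell.compc_bd_lt (p := q + (d + 1)) (k := k) x' x (by omega),
        MCell.compc_bd_lt (p := q + (d + 1)) (k := k) ((MGlob Q).castCell he.symm (MCell.compc q (d + 1 + k) ((MGlob Q).castCell he y') ((MGlob Q).castCell he x'))) ((MGlob Q).castCell he.symm (MCell.compc q (d + 1 + k) ((MGlob Q).castCell he y) ((MGlob Q).castCell he x))) (by omega),
        MGlob_cast_bd he.symm (MCell.compc q (d + 1 + k) ((MGlob Q).castCell he y) ((MGlob Q).castCell he x)) _ (by omega),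
        MCell.compc_bd_lt (p := q) (k := d + 1 + k) ((MGlob Q).castCell he y) ((MGlob Q).castCell he x) hq1,
        MGlob_cast_bd he x _ (by omega)]
    · rcases Nat.lt_or_ge i (q + 1) with hq2 | hq2
      · have hiq : i = q := by omega
        subst hiq
        rw [MCell.compc_bd_mid (p := i) (k := d + 1 + k) ((MGlob Q).castCell he (MCell.compc (i + (d + 1)) k y' y)) ((MGlob Q).castCell he (MCell.compc (i + (d + 1)) k x' x)) hi,
          MGlob_cast_bd he (MCell.compc (i + (d + 1)) k x' x) _ (by omega), MGlob_cast_bd he (MCell.compc (i + (d + 1)) k y' y) _ (by omega),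
          MCell.compc_bd_lt (p := i + (d + 1)) (k := k) x' x (by omega),
          MCell.compc_bd_lt (p := i + (d + 1)) (k := k) y' y (by omega),
          MCell.compc_bd_lt (p := i + (d + 1)) (k := k) ((MGlob Q).castCell he.symm (MCell.compc i (d + 1 + k) ((MGlob Q).castCell he y') ((MGlob Q).castCell he x'))) ((MGlob Q).castCell he.symm (MCell.compc i (d + 1 + k) ((MGlob Q).castCell he y) ((MGlob Q).castCell he x))) (by omega),
          MGlob_cast_bd he.symm (MCell.compc i (d + 1 + k) ((MGlob Q).castCell he y) ((MGlob Q).castCell he x)) _ (by omega),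
          MCell.compc_bd_mid (p := i) (k := d + 1 + k) ((MGlob Q).castCell he y) ((MGlob Q).castCell he x) _,
          MGlob_cast_bd he x _ (by omega), MGlob_cast_bd he y _ (by omega)]
      · rcases Nat.lt_or_ge i (q + (d + 1)) with hp1 | hp1
        · rw [MCell.compc_bd_gt (p := q) (k := d + 1 + k) ((MGlob Q).castCell he (MCell.compc (q + (d + 1)) k y' y)) ((MGlob Q).castCell he (MCell.compc (q + (d + 1)) k x' x)) (by omega) hi,
            MGlob_cast_bd he (MCell.compc (q + (d + 1)) k y' y) _ (by omega), MGlob_cast_bd he (MCell.compc (q + (d + 1)) k x' x) _ (by omega),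
            MCell.compc_bd_lt (p := q + (d + 1)) (k := k) y' y hp1,
            MCell.compc_bd_lt (p := q + (d + 1)) (k := k) x' x hp1,
            MCell.compc_bd_lt (p := q + (d + 1)) (k := k) ((MGlob Q).castCell he.symm (MCell.compc q (d + 1 + k) ((MGlob Q).castCell he y') ((MGlob Q).castCell he x'))) ((MGlob Q).castCell he.symm (MCell.compc q (d + 1 + k) ((MGlob Q).castCell he y) ((MGlob Q).castCell he x))) hp1,
            MGlob_cast_bd he.symm (MCell.compc q (d + 1 + k) ((MGlob Q).castCell he y) ((MGlob Q).castCell he x)) _ (by omega),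
            MCell.compc_bd_gt (p := q) (k := d + 1 + k) ((MGlob Q).castCell he y) ((MGlob Q).castCell he x) (by omega),
            MGlob_cast_bd he y _ (by omega), MGlob_cast_bd he x _ (by omega)]
        · rcases Nat.lt_or_ge i (q + (d + 1) + 1) with hp2 | hp2
          · have hiq : i = q + (d + 1) := by omega
            subst hiq
            rw [MCell.compc_bd_gt (p := q) (k := d + 1 + k) ((MGlob Q).castCell he (MCell.compc (q + (d + 1)) k y' y)) ((MGlob Q).castCell he (MCell.compc (q + (d + 1)) k x' x)) (by omega) hi,
              MGlob_cast_bd he (MCell.compc (q + (d + 1)) k y' y) _ (by omega), MGlob_cast_bd he (MCell.compc (q + (d + 1)) k x' x) _ (by omega),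
              MCell.compc_bd_mid (p := q + (d + 1)) (k := k) y' y _,
              MCell.compc_bd_mid (p := q + (d + 1)) (k := k) x' x _,
              MCell.compc_bd_mid (p := q + (d + 1)) (k := k) ((MGlob Q).castCell he.symm (MCell.compc q (d + 1 + k) ((MGlob Q).castCell he y') ((MGlob Q).castCell he x'))) ((MGlob Q).castCell he.symm (MCell.compc q (d + 1 + k) ((MGlob Q).castCell he y) ((MGlob Q).castCell he x))) _,
              MGlob_cast_bd he.symm (MCell.compc q (d + 1 + k) ((MGlob Q).castCell he y) ((MGlob Q).castCell he x)) _ (by omega), MGlob_cast_bd he.symm (MCell.compc q (d + 1 + k) ((MGlob Q).castCell he y') ((MGlob Q).castCell he x')) _ (by omega),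
              MCell.compc_bd_gt (p := q) (k := d + 1 + k) ((MGlob Q).castCell he y) ((MGlob Q).castCell he x) (by omega),
              MCell.compc_bd_gt (p := q) (k := d + 1 + k) ((MGlob Q).castCell he y') ((MGlob Q).castCell he x') (by omega),
              MGlob_cast_bd he y _ (by omega), MGlob_cast_bd he x _ (by omega),
              MGlob_cast_bd he y' _ (by omega), MGlob_cast_bd he x' _ (by omega)]
            show ((y.bd _ _).1, (y'.bd _ _).2) + ((x.bd _ _).1, (x'.bd _ _).2)
              = ((y.bd _ _ + x.bd _ _).1, (y'.bd _ _ + x'.bd _ _).2)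
            simp [Prod.add_def]
          · rw [MCell.compc_bd_gt (p := q) (k := d + 1 + k) ((MGlob Q).castCell he (MCell.compc (q + (d + 1)) k y' y)) ((MGlob Q).castCell he (MCell.compc (q + (d + 1)) k x' x)) (by omega) hi,
              MGlob_cast_bd he (MCell.compc (q + (d + 1)) k y' y) _ (by omega), MGlob_cast_bd he (MCell.compc (q + (d + 1)) k x' x) _ (by omega),
              MCell.compc_bd_gt (p := q + (d + 1)) (k := k) y' y (by omega),
              MCell.compc_bd_gt (p := q + (d + 1)) (k := k) x' x (by omega),
              MCell.compc_bd_gt (p := q + (d + 1)) (k := k) ((MGlob Q).castCell he.symm (MCell.compc q (d + 1 + k) ((MGlob Q).castCell he y') ((MGlob Q).castCell he x'))) ((MGlob Q).castCell he.symm (MCell.compc q (d + 1 + k) ((MGlob Q).castCell he y) ((MGlob Q).castCell he x))) (by omega),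
              MGlob_cast_bd he.symm (MCell.compc q (d + 1 + k) ((MGlob Q).castCell he y) ((MGlob Q).castCell he x)) _ (by omega), MGlob_cast_bd he.symm (MCell.compc q (d + 1 + k) ((MGlob Q).castCell he y') ((MGlob Q).castCell he x')) _ (by omega),
              MCell.compc_bd_gt (p := q) (k := d + 1 + k) ((MGlob Q).castCell he y) ((MGlob Q).castCell he x) (by omega),
              MCell.compc_bd_gt (p := q) (k := d + 1 + k) ((MGlob Q).castCell he y') ((MGlob Q).castCell he x') (by omega),
              MGlob_cast_bd he y _ (by omega), MGlob_cast_bd he x _ (by omega),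
              MGlob_cast_bd he y' _ (by omega), MGlob_cast_bd he x' _ (by omega),
              add_add_add_comm]
  · show ((MGlob Q).castCell he (MCell.compc (q + (d + 1)) k y' y)).top + ((MGlob Q).castCell he (MCell.compc (q + (d + 1)) k x' x)).top
      = ((MGlob Q).castCell he (MCell.compc (q + (d + 1)) k ((MGlob Q).castCell he.symm (MCell.compc q (d + 1 + k) ((MGlob Q).castCell he y') ((MGlob Q).castCell he x'))) ((MGlob Q).castCell he.symm (MCell.compc q (d + 1 + k) ((MGlob Q).castCell he y) ((MGlob Q).castCell he x))))).top
    rw [MGlob_cast_top he (MCell.compc (q + (d + 1)) k y' y), MGlob_cast_top he (MCell.compc (q + (d + 1)) k x' x), MGlob_cast_top he (MCell.compc (q + (d + 1)) k ((MGlob Q).castCell he.symm (MCell.compc q (d + 1 + k) ((MGlob Q).castCell he y') ((MGlob Q).castCell he x'))) ((MGlob Q).castCell he.symm (MCell.compc q (d + 1 + k) ((MGlob Q).castCell he y) ((MGlob Q).castCell he x))))]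
    show (he ▸ (y'.top + y.top)) + (he ▸ (x'.top + x.top)) = he ▸ (((MGlob Q).castCell he.symm (MCell.compc q (d + 1 + k) ((MGlob Q).castCell he y') ((MGlob Q).castCell he x'))).top + ((MGlob Q).castCell he.symm (MCell.compc q (d + 1 + k) ((MGlob Q).castCell he y) ((MGlob Q).castCell he x))).top)
    rw [MGlob_cast_top he.symm (MCell.compc q (d + 1 + k) ((MGlob Q).castCell he y') ((MGlob Q).castCell he x')), MGlob_cast_top he.symm (MCell.compc q (d + 1 + k) ((MGlob Q).castCell he y) ((MGlob Q).castCell he x))]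
    show _ = he ▸ ((he.symm ▸ (((MGlob Q).castCell he y').top + ((MGlob Q).castCell he x').top))
        + (he.symm ▸ (((MGlob Q).castCell he y).top + ((MGlob Q).castCell he x).top)))
    rw [MGlob_cast_top he y', MGlob_cast_top he x', MGlob_cast_top he y, MGlob_cast_top he x,
      mtop_cast_add he y'.top y.top, mtop_cast_add he x'.top x.top,
      mtop_cast_add he, mtop_cast_cast he, mtop_cast_cast he,
      add_add_add_comm]

/-- The counting model as a strict ω-category. -/
@[reducible] def MOmega (Q : GlobSet) : StrictOmegaCat where
  toGlobSet := MGlob Q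
  id' n x := MCell.idc x
  id_src n x := by
    refine MCell.ext' (fun i hi => ?_) ?_
    · exact MCell.idc_bd_lt x hi (Nat.lt_succ_of_lt hi)
    · show ((MCell.idc x).bd n _).1 = x.top
      rw [MCell.idc_bd_last]
  id_tgt n x := by
    refine MCell.ext' (fun i hi => ?_) ?_
    · exact MCell.idc_bd_lt x hi (Nat.lt_succ_of_lt hi)
    · show ((MCell.idc x).bd n _).2 = x.top
      rw [MCell.idc_bd_last]
  comp p k x' x _ := MCell.compc p k x' x
  comp_src_zero p x' x h := by
    refine MCell.ext' (fun i hi => ?_) ?_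
    · show (MCell.compc p 0 x' x).bd i _ = x.bd i _
      rw [MCell.compc_bd_lt x' x hi]
    · show ((MCell.compc p 0 x' x).bd p _).1 = (x.bd p _).1
      rw [MCell.compc_bd_mid]
  comp_tgt_zero p x' x h := by
    obtain ⟨hbd, _⟩ := mcomp_cond h
    refine MCell.ext' (fun i hi => ?_) ?_
    · show (MCell.compc p 0 x' x).bd i _ = x'.bd i _
      rw [MCell.compc_bd_lt x' x hi, hbd i _ hi]
    · show ((MCell.compc p 0 x' x).bd p _).2 = (x'.bd p _).2
      rw [MCell.compc_bd_mid]
  comp_src_succ p k x' x h h' := by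
    refine MCell.ext' (fun i hi => ?_) ?_
    · show (MCell.compc p (k + 1) x' x).bd i _
        = (MCell.compc p k ((MGlob Q).src _ x') ((MGlob Q).src _ x)).bd i hi
      rcases Nat.lt_or_ge i p with h1 | h1
      · rw [MCell.compc_bd_lt x' x h1, MCell.compc_bd_lt _ _ h1]
      · rcases Nat.lt_or_ge i (p + 1) with h2 | h2
        · have : i = p := by omega
          subst this
          rw [MCell.compc_bd_mid, MCell.compc_bd_mid]
        · rw [MCell.compc_bd_gt x' x (by omega), MCell.compc_bd_gt _ _ (by omega)]
    · show ((MCell.compc p (k + 1) x' x).bd (p + (k + 1)) _).1 = _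
      rw [MCell.compc_bd_gt x' x (by omega)]
      rfl
  comp_tgt_succ p k x' x h h' := by
    refine MCell.ext' (fun i hi => ?_) ?_
    · show (MCell.compc p (k + 1) x' x).bd i _
        = (MCell.compc p k ((MGlob Q).tgt _ x') ((MGlob Q).tgt _ x)).bd i hi
      rcases Nat.lt_or_ge i p with h1 | h1
      · rw [MCell.compc_bd_lt x' x h1, MCell.compc_bd_lt _ _ h1]
      · rcases Nat.lt_or_ge i (p + 1) with h2 | h2
        · have : i = p := by omega
          subst this
          rw [MCell.compc_bd_mid, MCell.compc_bd_mid]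
        · rw [MCell.compc_bd_gt x' x (by omega), MCell.compc_bd_gt _ _ (by omega)]
    · show ((MCell.compc p (k + 1) x' x).bd (p + (k + 1)) _).2 = _
      rw [MCell.compc_bd_gt x' x (by omega)]
      rfl
  comp_assoc p k z y x hzy hyx hl hr := by
    refine MCell.ext' (fun i hi => ?_) ?_
    · rcases Nat.lt_or_ge i p with h1 | h1
      · rw [MCell.compc_bd_lt _ x h1, MCell.compc_bd_lt _ _ h1, MCell.compc_bd_lt y x h1]
      · rcases Nat.lt_or_ge i (p + 1) with h2 | h2
        · have : i = p := by omega
          subst this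
          rw [MCell.compc_bd_mid, MCell.compc_bd_mid, MCell.compc_bd_mid, MCell.compc_bd_mid]
        · rw [MCell.compc_bd_gt _ x (by omega), MCell.compc_bd_gt z y (by omega),
            MCell.compc_bd_gt z _ (by omega), MCell.compc_bd_gt y x (by omega), add_assoc]
    · show ((MCell.compc p k z y).top + x.top) = z.top + (MCell.compc p k y x).top
      show (z.top + y.top) + x.top = z.top + (y.top + x.top)
      rw [add_assoc]
  comp_unit_left p k x h := mcomp_unit_left Q p k x
  comp_unit_right p k x h := mcomp_unit_right Q p k x
  id_comp' p k x' x h h' := by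
    refine MCell.ext' (fun i hi => ?_) ?_
    · rcases Nat.lt_or_ge i (p + (k + 1)) with hc | hc
      · rw [MCell.idc_bd_lt _ hc]
        rcases Nat.lt_or_ge i p with h1 | h1
        · rw [MCell.compc_bd_lt x' x h1, MCell.compc_bd_lt _ _ h1, MCell.idc_bd_lt x (by omega)]
        · rcases Nat.lt_or_ge i (p + 1) with h2 | h2
          · have : i = p := by omega
            subst this
            rw [MCell.compc_bd_mid, MCell.compc_bd_mid, MCell.idc_bd_lt x (by omega),
              MCell.idc_bd_lt x' (by omega)]
          · rw [MCell.compc_bd_gt x' x (by omega), MCell.compc_bd_gt _ _ (by omega),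
              MCell.idc_bd_lt x' (by omega), MCell.idc_bd_lt x (by omega)]
      · have : i = p + (k + 1) := by omega
        subst this
        rw [MCell.idc_bd_last, MCell.compc_bd_gt _ _ (by omega), MCell.idc_bd_last,
          MCell.idc_bd_last]
        show (x'.top + x.top, x'.top + x.top) = (x'.top + x.top, x'.top + x.top)
        rfl
    · show (0 : Multiset (Q.cells (p + (k + 2))))
        = (MCell.idc x').top + (MCell.idc x).top
      show (0 : Multiset (Q.cells (p + (k + 2)))) = 0 + 0
      rw [add_zero]
  exchange q d k j he y' y x' x _ _ _ _ _ _ := mexchange Q q d k j he y' y x' x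


/-! ### Stage 4: the unit of the counting model -/

/-- Iterated source down to an arbitrary lower level. -/
def GlobSet.srcB (Q : GlobSet) : ∀ n, Q.cells n → ∀ i, i < n → Q.cells i
  | 0, _, _, hi => absurd hi (Nat.not_lt_zero _)
  | n + 1, x, i, hi =>
    if h : i = n then Q.castCell h.symm (Q.src n x)
    else Q.srcB n (Q.src n x) i (by omega)

/-- Iterated target down to an arbitrary lower level. -/
def GlobSet.tgtB (Q : GlobSet) : ∀ n, Q.cells n → ∀ i, i < n → Q.cells i
  | 0, _, _, hi => absurd hi (Nat.not_lt_zero _)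
  | n + 1, x, i, hi =>
    if h : i = n then Q.castCell h.symm (Q.tgt n x)
    else Q.tgtB n (Q.tgt n x) i (by omega)

theorem GlobSet.srcB_last (Q : GlobSet) (n : ℕ) (x : Q.cells (n + 1)) (hi : n < n + 1) :
    Q.srcB (n + 1) x n hi = Q.src n x := by
  show (if h : n = n then _ else _) = _
  rw [dif_pos rfl]
  rfl

theorem GlobSet.tgtB_last (Q : GlobSet) (n : ℕ) (x : Q.cells (n + 1)) (hi : n < n + 1) :
    Q.tgtB (n + 1) x n hi = Q.tgt n x := by
  show (if h : n = n then _ else _) = _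
  rw [dif_pos rfl]
  rfl

theorem GlobSet.srcB_lt (Q : GlobSet) (n : ℕ) (x : Q.cells (n + 1)) {i : ℕ} (h : i < n)
    (hi : i < n + 1) : Q.srcB (n + 1) x i hi = Q.srcB n (Q.src n x) i h := by
  show (if h : i = n then _ else _) = _
  rw [dif_neg (by omega)]

theorem GlobSet.tgtB_lt (Q : GlobSet) (n : ℕ) (x : Q.cells (n + 1)) {i : ℕ} (h : i < n)
    (hi : i < n + 1) : Q.tgtB (n + 1) x i hi = Q.tgtB n (Q.tgt n x) i h := by
  show (if h : i = n then _ else _) = _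
  rw [dif_neg (by omega)]

/-- Boundaries of source and target agree. -/
theorem GlobSet.srcB_src_eq_tgt (Q : GlobSet) :
    ∀ n (x : Q.cells (n + 1)) i (hi : i < n),
      Q.srcB n (Q.src n x) i hi = Q.srcB n (Q.tgt n x) i hi
  | n + 1, x, i, hi => by
    by_cases h : i = n
    · subst h
      rw [Q.srcB_last, Q.srcB_last, Q.glob_ss]
    · rw [Q.srcB_lt n _ (by omega), Q.srcB_lt n _ (by omega), Q.glob_ss]

theorem GlobSet.tgtB_src_eq_tgt (Q : GlobSet) :
    ∀ n (x : Q.cells (n + 1)) i (hi : i < n),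
      Q.tgtB n (Q.src n x) i hi = Q.tgtB n (Q.tgt n x) i hi
  | n + 1, x, i, hi => by
    by_cases h : i = n
    · subst h
      rw [Q.tgtB_last, Q.tgtB_last, Q.glob_tt]
    · rw [Q.tgtB_lt n _ (by omega), Q.tgtB_lt n _ (by omega), Q.glob_tt]

/-- The unit embedding of a globular set into its counting model. -/
def countUnit (Q : GlobSet) : Q ⟶ (MOmega Q).toGlobSet where
  app n q := ⟨fun i hi => ({Q.srcB n q i hi}, {Q.tgtB n q i hi}), {q}⟩
  app_src n q := by
    refine MCell.ext' (fun i hi => ?_) ?_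
    · show ({Q.srcB (n + 1) q i _}, {Q.tgtB (n + 1) q i _})
        = ({Q.srcB n (Q.src n q) i hi}, {Q.tgtB n (Q.src n q) i hi})
      rw [Q.srcB_lt n q hi, Q.tgtB_lt n q hi, Q.tgtB_src_eq_tgt n q i hi]
    · show ({Q.srcB (n + 1) q n _} : Multiset (Q.cells n)) = {Q.src n q}
      rw [Q.srcB_last]
  app_tgt n q := by
    refine MCell.ext' (fun i hi => ?_) ?_
    · show ({Q.srcB (n + 1) q i _}, {Q.tgtB (n + 1) q i _})
        = ({Q.srcB n (Q.tgt n q) i hi}, {Q.tgtB n (Q.tgt n q) i hi})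
      rw [Q.srcB_lt n q hi, Q.tgtB_lt n q hi, Q.srcB_src_eq_tgt n q i hi]
    · show ({Q.tgtB (n + 1) q n _} : Multiset (Q.cells n)) = {Q.tgt n q}
      rw [Q.tgtB_last]

/-! ### Stage 5: the sub-ω-category generated by a globular map -/

theorem GlobSet.castCell_refl (Q : GlobSet) {n : ℕ} (e : n = n) (x : Q.cells n) :
    Q.castCell e x = x := rfl

theorem StrictOmegaCat.comp_congr (C : StrictOmegaCat) (p k : ℕ)
    {a a' b b' : C.cells (p + (k + 1))} (ha : a = a') (hb : b = b')
    (h : C.toGlobSet.srcIter (k + 1) a = C.toGlobSet.tgtIter (k + 1) b)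
    (h' : C.toGlobSet.srcIter (k + 1) a' = C.toGlobSet.tgtIter (k + 1) b') :
    C.comp p k a b h = C.comp p k a' b' h' := by
  subst ha; subst hb; rfl

section Sub

variable (Q : GlobSet) (C : StrictOmegaCat) (u : Q ⟶ C.toGlobSet)

/-- Cells generated by the image of `u` under identities and compositions. -/
inductive InS : ∀ n, C.cells n → Prop
  | gen (n : ℕ) (q : Q.cells n) : InS n (u.app n q)
  | idc {n : ℕ} {x : C.cells n} : InS n x → InS (n + 1) (C.id' n x)
  | cmp (p k : ℕ) {x' x : C.cells (p + (k + 1))}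
      (h : C.toGlobSet.srcIter (k + 1) x' = C.toGlobSet.tgtIter (k + 1) x) :
      InS (p + (k + 1)) x' → InS (p + (k + 1)) x → InS (p + (k + 1)) (C.comp p k x' x h)

variable {Q C u}

theorem InS.src_tgt : ∀ {n : ℕ} {c : C.cells n}, InS Q C u n c →
    ∀ m (e : n = m + 1),
      InS Q C u m (C.toGlobSet.src m (C.toGlobSet.castCell e c))
        ∧ InS Q C u m (C.toGlobSet.tgt m (C.toGlobSet.castCell e c)) := by
  intro n c h
  induction h with
  | gen n q =>
    intro m e
    subst e
    show InS Q C u m (C.toGlobSet.src m (u.app (m + 1) q))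
        ∧ InS Q C u m (C.toGlobSet.tgt m (u.app (m + 1) q))
    rw [u.app_src, u.app_tgt]
    exact ⟨InS.gen m _, InS.gen m _⟩
  | @idc n x hx ih =>
    intro m e
    have em : m = n := by omega
    subst em
    show InS Q C u m (C.toGlobSet.src m (C.id' m x))
        ∧ InS Q C u m (C.toGlobSet.tgt m (C.id' m x))
    rw [C.id_src, C.id_tgt]
    exact ⟨hx, hx⟩
  | @cmp p k x' x h hx' hx ihx' ihx =>
    intro m e
    have em : m = p + k := by omega
    subst em
    show InS Q C u (p + k) (C.toGlobSet.src (p + k) (C.comp p k x' x h))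
        ∧ InS Q C u (p + k) (C.toGlobSet.tgt (p + k) (C.comp p k x' x h))
    cases k with
    | zero =>
      show InS Q C u p (C.toGlobSet.src p (C.comp p 0 x' x h))
          ∧ InS Q C u p (C.toGlobSet.tgt p (C.comp p 0 x' x h))
      rw [C.comp_src_zero p _ _ h, C.comp_tgt_zero p _ _ h]
      exact ⟨(ihx p rfl).1, (ihx' p rfl).2⟩
    | succ k =>
      have h' : C.toGlobSet.srcIter (k + 1) (C.toGlobSet.src (p + (k + 1)) x')
          = C.toGlobSet.tgtIter (k + 1) (C.toGlobSet.src (p + (k + 1)) x) := by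
        have h0 : C.toGlobSet.srcIter (k + 1) (C.toGlobSet.src (p + (k + 1)) x')
            = C.toGlobSet.tgtIter (k + 1) (C.toGlobSet.tgt (p + (k + 1)) x) := h
        rw [h0, ← C.toGlobSet.tgtIter_src k x]
      have h'' : C.toGlobSet.srcIter (k + 1) (C.toGlobSet.tgt (p + (k + 1)) x')
          = C.toGlobSet.tgtIter (k + 1) (C.toGlobSet.tgt (p + (k + 1)) x) := by
        have h0 : C.toGlobSet.srcIter (k + 1) (C.toGlobSet.src (p + (k + 1)) x')
            = C.toGlobSet.tgtIter (k + 1) (C.toGlobSet.tgt (p + (k + 1)) x) := h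
        rw [← h0, C.toGlobSet.srcIter_tgt k x']
      rw [C.comp_src_succ p k _ _ h h', C.comp_tgt_succ p k _ _ h h'']
      refine ⟨InS.cmp p k h' ?_ ?_, InS.cmp p k h'' ?_ ?_⟩
      · exact (ihx' _ rfl).1
      · exact (ihx _ rfl).1
      · exact (ihx' _ rfl).2
      · exact (ihx _ rfl).2

theorem InS.src' {n : ℕ} {c : C.cells (n + 1)} (h : InS Q C u (n + 1) c) :
    InS Q C u n (C.toGlobSet.src n c) := (h.src_tgt n rfl).1

theorem InS.tgt' {n : ℕ} {c : C.cells (n + 1)} (h : InS Q C u (n + 1) c) :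
    InS Q C u n (C.toGlobSet.tgt n c) := (h.src_tgt n rfl).2

variable (Q C u)

/-- Underlying globular set of the sub-ω-category generated by `u`. -/
def subGlob : GlobSet where
  cells n := { c : C.cells n // InS Q C u n c }
  src n x := ⟨C.toGlobSet.src n x.1, x.2.src'⟩
  tgt n x := ⟨C.toGlobSet.tgt n x.1, x.2.tgt'⟩
  glob_ss n x := Subtype.ext (C.toGlobSet.glob_ss n x.1)
  glob_tt n x := Subtype.ext (C.toGlobSet.glob_tt n x.1)

/-- Identities in the sub-ω-category. -/
def subId (n : ℕ) (x : (subGlob Q C u).cells n) : (subGlob Q C u).cells (n + 1) :=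
  ⟨C.id' n x.1, x.2.idc⟩

theorem subGlob_srcIter_val :
    ∀ (k : ℕ) {n : ℕ} (x : (subGlob Q C u).cells (n + k)),
      ((subGlob Q C u).srcIter k x).1 = C.toGlobSet.srcIter k x.1
  | 0, _, _ => rfl
  | k + 1, n, x => subGlob_srcIter_val k ((subGlob Q C u).src (n + k) x)

theorem subGlob_tgtIter_val :
    ∀ (k : ℕ) {n : ℕ} (x : (subGlob Q C u).cells (n + k)),
      ((subGlob Q C u).tgtIter k x).1 = C.toGlobSet.tgtIter k x.1
  | 0, _, _ => rfl
  | k + 1, n, x => subGlob_tgtIter_val k ((subGlob Q C u).tgt (n + k) x)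

theorem subGlob_iterId_val :
    ∀ (k : ℕ) {n : ℕ} (z : (subGlob Q C u).cells n),
      (iterId (subGlob Q C u).cells (subId Q C u) k z).1 = iterId C.cells C.id' k z.1
  | 0, _, _ => rfl
  | k + 1, n, z => congrArg (C.id' (n + k)) (subGlob_iterId_val k z)

theorem subGlob_cast_val {m m' : ℕ} (e : m = m') (x : (subGlob Q C u).cells m) :
    ((subGlob Q C u).castCell e x).1 = C.toGlobSet.castCell e x.1 := by
  subst e; rfl

variable {Q C u}

/-- Transfer of composability conditions to the ambient category. -/
theorem subCond {p k : ℕ} {x' x : (subGlob Q C u).cells (p + (k + 1))}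
    (h : (subGlob Q C u).srcIter (k + 1) x' = (subGlob Q C u).tgtIter (k + 1) x) :
    C.toGlobSet.srcIter (k + 1) x'.1 = C.toGlobSet.tgtIter (k + 1) x.1 := by
  have := congrArg Subtype.val h
  rwa [subGlob_srcIter_val, subGlob_tgtIter_val] at this

variable (Q C u)

/-- Composition in the sub-ω-category. -/
def subComp (p k : ℕ) (x' x : (subGlob Q C u).cells (p + (k + 1)))
    (h : (subGlob Q C u).srcIter (k + 1) x' = (subGlob Q C u).tgtIter (k + 1) x) :
    (subGlob Q C u).cells (p + (k + 1)) :=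
  ⟨C.comp p k x'.1 x.1 (subCond h), InS.cmp p k (subCond h) x'.2 x.2⟩

/-- The sub-ω-category generated by the image of `u`. -/
def subCat : StrictOmegaCat where
  toGlobSet := subGlob Q C u
  id' := subId Q C u
  id_src n x := Subtype.ext (C.id_src n x.1)
  id_tgt n x := Subtype.ext (C.id_tgt n x.1)
  comp := subComp Q C u
  comp_src_zero p x' x h := Subtype.ext (C.comp_src_zero p x'.1 x.1 (subCond h))
  comp_tgt_zero p x' x h := Subtype.ext (C.comp_tgt_zero p x'.1 x.1 (subCond h))
  comp_src_succ p k x' x h h' := Subtype.ext (C.comp_src_succ p k x'.1 x.1 (subCond h) (subCond h'))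
  comp_tgt_succ p k x' x h h' := Subtype.ext (C.comp_tgt_succ p k x'.1 x.1 (subCond h) (subCond h'))
  comp_assoc p k z y x hzy hyx hl hr := Subtype.ext (by
    have hl' : C.toGlobSet.srcIter (k + 1) (C.comp p k z.1 y.1 (subCond hzy))
        = C.toGlobSet.tgtIter (k + 1) x.1 := subCond hl
    have hr' : C.toGlobSet.srcIter (k + 1) z.1
        = C.toGlobSet.tgtIter (k + 1) (C.comp p k y.1 x.1 (subCond hyx)) := subCond hr
    exact C.comp_assoc p k z.1 y.1 x.1 (subCond hzy) (subCond hyx) hl' hr')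
  comp_unit_left p k x h := Subtype.ext (by
    show C.comp p k (iterId (subGlob Q C u).cells (subId Q C u) (k + 1)
        ((subGlob Q C u).tgtIter (k + 1) x)).1 x.1 (subCond h) = x.1
    have hv : (iterId (subGlob Q C u).cells (subId Q C u) (k + 1)
        ((subGlob Q C u).tgtIter (k + 1) x)).1
        = iterId C.cells C.id' (k + 1) (C.toGlobSet.tgtIter (k + 1) x.1) := by
      rw [subGlob_iterId_val, subGlob_tgtIter_val]
    have hcond : C.toGlobSet.srcIter (k + 1)
          (iterId C.cells C.id' (k + 1) (C.toGlobSet.tgtIter (k + 1) x.1))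
        = C.toGlobSet.tgtIter (k + 1) x.1 := by
      rw [C.srcIter_iterId]
    exact (C.comp_congr p k hv rfl (subCond h) hcond).trans (C.comp_unit_left p k x.1 hcond))
  comp_unit_right p k x h := Subtype.ext (by
    show C.comp p k x.1 (iterId (subGlob Q C u).cells (subId Q C u) (k + 1)
        ((subGlob Q C u).srcIter (k + 1) x)).1 (subCond h) = x.1
    have hv : (iterId (subGlob Q C u).cells (subId Q C u) (k + 1)
        ((subGlob Q C u).srcIter (k + 1) x)).1
        = iterId C.cells C.id' (k + 1) (C.toGlobSet.srcIter (k + 1) x.1) := by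
      rw [subGlob_iterId_val, subGlob_srcIter_val]
    have hcond : C.toGlobSet.srcIter (k + 1) x.1
        = C.toGlobSet.tgtIter (k + 1)
            (iterId C.cells C.id' (k + 1) (C.toGlobSet.srcIter (k + 1) x.1)) := by
      rw [C.tgtIter_iterId]
    exact (C.comp_congr p k rfl hv (subCond h) hcond).trans (C.comp_unit_right p k x.1 hcond))
  id_comp' p k x' x h h' := Subtype.ext (by
    show C.id' (p + (k + 1)) (C.comp p k x'.1 x.1 (subCond h))
        = C.comp p (k + 1) (C.id' _ x'.1) (C.id' _ x.1) (subCond h')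
    exact C.id_comp' p k x'.1 x.1 (subCond h) (subCond h'))
  exchange q d k j he y' y x' x h₁ h₂ h₃ h₄ h₅ h₆ := Subtype.ext (by
    have cy' : ((subGlob Q C u).castCell he y').1 = (C.toGlobSet.castCell he y'.1) := subGlob_cast_val Q C u he y'
    have cx' : ((subGlob Q C u).castCell he x').1 = (C.toGlobSet.castCell he x'.1) := subGlob_cast_val Q C u he x'
    have cy : ((subGlob Q C u).castCell he y).1 = (C.toGlobSet.castCell he y.1) := subGlob_cast_val Q C u he y
    have cx : ((subGlob Q C u).castCell he x).1 = (C.toGlobSet.castCell he x.1) := subGlob_cast_val Q C u he x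
    have H₄ : C.toGlobSet.srcIter (j + 1) (C.toGlobSet.castCell he y'.1) = C.toGlobSet.tgtIter (j + 1) (C.toGlobSet.castCell he x'.1) := by
      have := subCond h₄
      rwa [cy', cx'] at this
    have H₅ : C.toGlobSet.srcIter (j + 1) (C.toGlobSet.castCell he y.1) = C.toGlobSet.tgtIter (j + 1) (C.toGlobSet.castCell he x.1) := by
      have := subCond h₅
      rwa [cy, cx] at this
    have c1' : ((subGlob Q C u).castCell he (subComp Q C u (q + (d + 1)) k y' y h₁)).1 = (C.toGlobSet.castCell he (C.comp (q + (d + 1)) k y'.1 y.1 (subCond h₁))) := subGlob_cast_val Q C u he _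
    have c2' : ((subGlob Q C u).castCell he (subComp Q C u (q + (d + 1)) k x' x h₂)).1 = (C.toGlobSet.castCell he (C.comp (q + (d + 1)) k x'.1 x.1 (subCond h₂))) := subGlob_cast_val Q C u he _
    have H₃ : C.toGlobSet.srcIter (j + 1) (C.toGlobSet.castCell he (C.comp (q + (d + 1)) k y'.1 y.1 (subCond h₁))) = C.toGlobSet.tgtIter (j + 1) (C.toGlobSet.castCell he (C.comp (q + (d + 1)) k x'.1 x.1 (subCond h₂))) := by
      have := subCond h₃
      rwa [c1', c2'] at this
    have eC : ((subGlob Q C u).castCell he.symm (subComp Q C u q j ((subGlob Q C u).castCell he y') ((subGlob Q C u).castCell he x') h₄)).1 = (C.toGlobSet.castCell he.symm (C.comp q j (C.toGlobSet.castCell he y'.1) (C.toGlobSet.castCell he x'.1) H₄)) :=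
      (subGlob_cast_val Q C u he.symm _).trans
        (congrArg (C.toGlobSet.castCell he.symm) (C.comp_congr q j cy' cx' (subCond h₄) H₄))
    have eD : ((subGlob Q C u).castCell he.symm (subComp Q C u q j ((subGlob Q C u).castCell he y) ((subGlob Q C u).castCell he x) h₅)).1 = (C.toGlobSet.castCell he.symm (C.comp q j (C.toGlobSet.castCell he y.1) (C.toGlobSet.castCell he x.1) H₅)) :=
      (subGlob_cast_val Q C u he.symm _).trans
        (congrArg (C.toGlobSet.castCell he.symm) (C.comp_congr q j cy cx (subCond h₅) H₅))
    have H₆' : C.toGlobSet.srcIter (k + 1) (C.toGlobSet.castCell he.symm (C.comp q j (C.toGlobSet.castCell he y'.1) (C.toGlobSet.castCell he x'.1) H₄)) = C.toGlobSet.tgtIter (k + 1) (C.toGlobSet.castCell he.symm (C.comp q j (C.toGlobSet.castCell he y.1) (C.toGlobSet.castCell he x.1) H₅)) := by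
      have := subCond h₆
      rwa [eC, eD] at this
    have hR : ((subGlob Q C u).castCell he (subComp Q C u (q + (d + 1)) k ((subGlob Q C u).castCell he.symm (subComp Q C u q j ((subGlob Q C u).castCell he y') ((subGlob Q C u).castCell he x') h₄)) ((subGlob Q C u).castCell he.symm (subComp Q C u q j ((subGlob Q C u).castCell he y) ((subGlob Q C u).castCell he x) h₅)) h₆)).1 = (C.toGlobSet.castCell he (C.comp (q + (d + 1)) k (C.toGlobSet.castCell he.symm (C.comp q j (C.toGlobSet.castCell he y'.1) (C.toGlobSet.castCell he x'.1) H₄)) (C.toGlobSet.castCell he.symm (C.comp q j (C.toGlobSet.castCell he y.1) (C.toGlobSet.castCell he x.1) H₅)) H₆')) :=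
      (subGlob_cast_val Q C u he _).trans
        (congrArg (C.toGlobSet.castCell he)
          (C.comp_congr (q + (d + 1)) k eC eD (subCond h₆) H₆'))
    show C.comp q j ((subGlob Q C u).castCell he (subComp Q C u (q + (d + 1)) k y' y h₁)).1 ((subGlob Q C u).castCell he (subComp Q C u (q + (d + 1)) k x' x h₂)).1 (subCond h₃) = ((subGlob Q C u).castCell he (subComp Q C u (q + (d + 1)) k ((subGlob Q C u).castCell he.symm (subComp Q C u q j ((subGlob Q C u).castCell he y') ((subGlob Q C u).castCell he x') h₄)) ((subGlob Q C u).castCell he.symm (subComp Q C u q j ((subGlob Q C u).castCell he y) ((subGlob Q C u).castCell he x) h₅)) h₆)).1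
    exact (C.comp_congr q j c1' c2' (subCond h₃) H₃).trans
      ((C.exchange q d k j he y'.1 y.1 x'.1 x.1 (subCond h₁) (subCond h₂) H₃ H₄ H₅ H₆').trans
        hR.symm))

end Sub


/-! ### Stage 6: counting analysis -/

theorem mpair_add_eq_zero {Q' : GlobSet} {i : ℕ} {a b : MPair Q' i} (h : a + b = 0) :
    a = 0 ∧ b = 0 := by
  have h1 : a.1 + b.1 = 0 := by
    have := congrArg Prod.fst h
    simpa using this
  have h2 : a.2 + b.2 = 0 := by
    have := congrArg Prod.snd h
    simpa using this
  have c1 : Multiset.card a.1 + Multiset.card b.1 = 0 := by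
    rw [← Multiset.card_add, h1]; rfl
  have c2 : Multiset.card a.2 + Multiset.card b.2 = 0 := by
    rw [← Multiset.card_add, h2]; rfl
  constructor
  · refine Prod.ext ?_ ?_ <;> simp [← Multiset.card_eq_zero] <;> omega
  · refine Prod.ext ?_ ?_ <;> simp [← Multiset.card_eq_zero] <;> omega

section Count

variable {Q Q' : GlobSet} {C : StrictOmegaCat} (φ : Q ⟶ Q') (u : Q ⟶ C.toGlobSet)
  (ψ : StrictFunctor C (MOmega Q'))
  (hψ : ∀ n (q : Q.cells n),
    ψ.toGlobHom.app n (u.app n q) = (countUnit Q').app n (φ.app n q))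

/-- The image of an identity cell under `ψ`. -/
theorem psi_id (n : ℕ) (c : C.cells n) :
    ψ.toGlobHom.app (n + 1) (C.id' n c) = MCell.idc (ψ.toGlobHom.app n c) :=
  ψ.map_id n c

/-- Transport of the composability condition along `ψ`. -/
theorem psi_cond {p k : ℕ} {x' x : C.cells (p + (k + 1))}
    (h : C.toGlobSet.srcIter (k + 1) x' = C.toGlobSet.tgtIter (k + 1) x) :
    (MOmega Q').toGlobSet.srcIter (k + 1) (ψ.toGlobHom.app (p + (k + 1)) x')
      = (MOmega Q').toGlobSet.tgtIter (k + 1) (ψ.toGlobHom.app (p + (k + 1)) x) := by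
  have h1 := ψ.toGlobHom.app_srcIter (k + 1) (n := p) x'
  have h2 := ψ.toGlobHom.app_tgtIter (k + 1) (n := p) x
  rw [← h1, ← h2, h]

/-- The image of a composite cell under `ψ`. -/
theorem psi_comp {p k : ℕ} {x' x : C.cells (p + (k + 1))}
    (h : C.toGlobSet.srcIter (k + 1) x' = C.toGlobSet.tgtIter (k + 1) x) :
    ψ.toGlobHom.app (p + (k + 1)) (C.comp p k x' x h)
      = MCell.compc p k (ψ.toGlobHom.app (p + (k + 1)) x')
          (ψ.toGlobHom.app (p + (k + 1)) x) :=
  ψ.map_comp p k x' x h (psi_cond ψ h)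

include hψ in
theorem psi_balance {n : ℕ} {c : C.cells n} (hc : InS Q C u n c) :
    ∀ i (hi : i < n),
      Multiset.card ((ψ.toGlobHom.app n c).bd i hi).1
        = Multiset.card ((ψ.toGlobHom.app n c).bd i hi).2 := by
  induction hc with
  | gen n q =>
    intro i hi
    rw [hψ]
    rfl
  | @idc n x hx ih =>
    intro i hi
    rw [psi_id]
    rcases Nat.lt_or_ge i n with h1 | h1
    · rw [MCell.idc_bd_lt _ h1]
      exact ih i h1
    · have : i = n := by omega
      subst this
      rw [MCell.idc_bd_last]
  | @cmp p k x' x h hx' hx ihx' ihx =>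
    intro i hi
    rw [psi_comp ψ h]
    obtain ⟨hbd, hpp⟩ := mcomp_cond (psi_cond ψ h)
    rcases Nat.lt_or_ge i p with h1 | h1
    · rw [MCell.compc_bd_lt _ _ h1]
      exact ihx i _
    · rcases Nat.lt_or_ge i (p + 1) with h2 | h2
      · have : i = p := by omega
        subst this
        rw [MCell.compc_bd_mid]
        calc Multiset.card ((ψ.toGlobHom.app _ x).bd i hi).1
            = Multiset.card ((ψ.toGlobHom.app _ x).bd i hi).2 := ihx i hi
          _ = Multiset.card ((ψ.toGlobHom.app _ x').bd i hi).1 := by rw [hpp]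
          _ = Multiset.card ((ψ.toGlobHom.app _ x').bd i hi).2 := ihx' i hi
      · rw [MCell.compc_bd_gt _ _ (by omega)]
        show Multiset.card ((ψ.toGlobHom.app _ x').bd i hi
            + (ψ.toGlobHom.app _ x).bd i hi).1 = _
        rw [Prod.fst_add, Prod.snd_add, Multiset.card_add, Multiset.card_add,
          ihx' i hi, ihx i hi]

include hψ in
theorem psi_prop {n : ℕ} {c : C.cells n} (hc : InS Q C u n c) :
    ∀ i (hi : i < n), ((ψ.toGlobHom.app n c).bd i hi).1 = 0 →
      (ψ.toGlobHom.app n c).top = 0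
        ∧ ∀ j (hj : j < n), i < j → ((ψ.toGlobHom.app n c).bd j hj).1 = 0 := by
  induction hc with
  | gen n q =>
    intro i hi h0
    rw [hψ] at h0
    exact absurd h0 (by simp [countUnit])
  | @idc n x hx ih =>
    intro i hi h0
    rw [psi_id] at h0 ⊢
    rcases Nat.lt_or_ge i n with h1 | h1
    · rw [MCell.idc_bd_lt _ h1] at h0
      obtain ⟨ht, hab⟩ := ih i h1 h0
      refine ⟨rfl, fun j hj hij => ?_⟩
      rcases Nat.lt_or_ge j n with h2 | h2
      · rw [MCell.idc_bd_lt _ h2]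
        exact hab j h2 hij
      · have : j = n := by omega
        subst this
        rw [MCell.idc_bd_last]
        exact ht
    · refine ⟨rfl, fun j hj hij => ?_⟩
      omega
  | @cmp p k x' x h hx' hx ihx' ihx =>
    intro i hi h0
    rw [psi_comp ψ h] at h0 ⊢
    obtain ⟨hbd, hpp⟩ := mcomp_cond (psi_cond ψ h)
    -- in every case we first establish vanishing of both factors from level `m` on
    have key : ∀ m (hm : m < p + (k + 1)), m ≤ p →
        ((ψ.toGlobHom.app _ x).bd m hm).1 = 0 →
        (ψ.toGlobHom.app _ x').top = 0 ∧ (ψ.toGlobHom.app _ x).top = 0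
          ∧ (∀ j (hj : j < p + (k + 1)), m < j →
              ((ψ.toGlobHom.app _ x').bd j hj).1 = 0
                ∧ ((ψ.toGlobHom.app _ x).bd j hj).1 = 0) := by
      intro m hm hmp hzero
      obtain ⟨htx, habx⟩ := ihx m hm hzero
      have hxp1 : ((ψ.toGlobHom.app _ x).bd p (by omega)).1 = 0 := by
        rcases Nat.lt_or_ge m p with hmp' | hmp'
        · exact habx p (by omega) hmp'
        · have : m = p := by omega
          subst this
          exact hzero
      have hxp2 : ((ψ.toGlobHom.app _ x).bd p (by omega)).2 = 0 := by
        rw [← Multiset.card_eq_zero, ← psi_balance φ u ψ hψ hx p (by omega),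
          Multiset.card_eq_zero]
        exact hxp1
      have hx'p1 : ((ψ.toGlobHom.app _ x').bd p (by omega)).1 = 0 := by
        rw [hpp]
        exact hxp2
      obtain ⟨htx', habx'⟩ := ihx' p (by omega) hx'p1
      refine ⟨htx', htx, fun j hj hmj => ?_⟩
      constructor
      · rcases Nat.lt_or_ge p j with hpj | hpj
        · exact habx' j hj hpj
        · rcases Nat.lt_or_ge j p with hjp | hjp
          · rw [hbd j hj hjp]
            exact habx j hj hmj
          · have : j = p := by omega
            subst this
            exact hx'p1
      · exact habx j hj hmj
    rcases Nat.lt_or_ge i p with h1 | h1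
    · rw [MCell.compc_bd_lt _ _ h1] at h0
      obtain ⟨ht', ht, hab⟩ := key i hi (by omega) h0
      refine ⟨?_, fun j hj hij => ?_⟩
      · show (ψ.toGlobHom.app _ x').top + (ψ.toGlobHom.app _ x).top = 0
        rw [ht', ht, add_zero]
      · rcases Nat.lt_or_ge j p with h2 | h2
        · rw [MCell.compc_bd_lt _ _ h2]
          exact (hab j hj hij).2
        · rcases Nat.lt_or_ge j (p + 1) with h3 | h3
          · have : j = p := by omega
            subst this
            rw [MCell.compc_bd_mid]
            exact (hab j hj hij).2
          · rw [MCell.compc_bd_gt _ _ (by omega)]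
            show ((ψ.toGlobHom.app _ x').bd j hj + (ψ.toGlobHom.app _ x).bd j hj).1 = 0
            rw [Prod.fst_add, (hab j hj hij).1, (hab j hj hij).2, add_zero]
    · rcases Nat.lt_or_ge i (p + 1) with h2 | h2
      · have : i = p := by omega
        subst this
        rw [MCell.compc_bd_mid] at h0
        have h0' : ((ψ.toGlobHom.app _ x).bd i hi).1 = 0 := h0
        obtain ⟨ht', ht, hab⟩ := key i hi (by omega) h0'
        refine ⟨?_, fun j hj hij => ?_⟩
        · show (ψ.toGlobHom.app _ x').top + (ψ.toGlobHom.app _ x).top = 0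
          rw [ht', ht, add_zero]
        · rw [MCell.compc_bd_gt _ _ (by omega)]
          show ((ψ.toGlobHom.app _ x').bd j hj + (ψ.toGlobHom.app _ x).bd j hj).1 = 0
          rw [Prod.fst_add, (hab j hj hij).1, (hab j hj hij).2, add_zero]
      · rw [MCell.compc_bd_gt _ _ (by omega), Prod.fst_add] at h0
        have hcc := congrArg Multiset.card h0
        rw [Multiset.card_add] at hcc
        simp only [Multiset.card_zero] at hcc
        have hz1 : ((ψ.toGlobHom.app _ x').bd i hi).1 = 0 := by
          rw [← Multiset.card_eq_zero]; omega
        have hz2 : ((ψ.toGlobHom.app _ x).bd i hi).1 = 0 := by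
          rw [← Multiset.card_eq_zero]; omega
        obtain ⟨htx', habx'⟩ := ihx' i hi hz1
        obtain ⟨htx, habx⟩ := ihx i hi hz2
        refine ⟨?_, fun j hj hij => ?_⟩
        · show (ψ.toGlobHom.app _ x').top + (ψ.toGlobHom.app _ x).top = 0
          rw [htx', htx, add_zero]
        · rw [MCell.compc_bd_gt _ _ (by omega)]
          show ((ψ.toGlobHom.app _ x').bd j hj + (ψ.toGlobHom.app _ x).bd j hj).1 = 0
          rw [Prod.fst_add, habx' j hj hij, habx j hj hij, add_zero]

/-- Vanishing of all data above level `p`. -/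
def MVan {n : ℕ} (w : MCell Q' n) (p : ℕ) : Prop :=
  w.top = 0 ∧ ∀ i (hi : i < n), p < i → w.bd i hi = (0 : MPair Q' i)

include hψ in
theorem psi_iden {n : ℕ} {c : C.cells n} (hc : InS Q C u n c) :
    ∀ p, p < n → MVan (ψ.toGlobHom.app n c) p → C.IsIden p n c := by
  induction hc with
  | gen n q =>
    intro p hp hvan
    exfalso
    have := hvan.1
    rw [hψ] at this
    exact absurd this (by simp [countUnit])
  | @idc n x hx ih =>
    intro p hp hvan
    rcases Nat.lt_or_ge p n with h1 | h1
    · refine StrictOmegaCat.IsIden.step _ (ih p h1 ⟨?_, ?_⟩)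
      · have := hvan.2 n (Nat.lt_succ_self n) (by omega)
        rw [psi_id, MCell.idc_bd_last] at this
        have := congrArg Prod.fst this
        exact this
      · intro i hi hpi
        have := hvan.2 i (by omega) hpi
        rw [psi_id, MCell.idc_bd_lt _ hi] at this
        exact this
    · have : p = n := by omega
      subst this
      exact StrictOmegaCat.IsIden.step _ (StrictOmegaCat.IsIden.base _)
  | @cmp p'' k'' x' x h hx' hx ihx' ihx =>
    intro p hp hvan
    obtain ⟨hbd, hpp⟩ := mcomp_cond (psi_cond ψ h)
    obtain ⟨hvt, hvb⟩ := hvan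
    rw [psi_comp ψ h] at hvt hvb
    have hvt' : (ψ.toGlobHom.app _ x').top + (ψ.toGlobHom.app _ x).top = 0 := hvt
    have ht' : (ψ.toGlobHom.app _ x').top = 0 ∧ (ψ.toGlobHom.app _ x).top = 0 := by
      have hcc := congrArg Multiset.card hvt'
      rw [Multiset.card_add] at hcc
      simp only [Multiset.card_zero] at hcc
      constructor <;> rw [← Multiset.card_eq_zero] <;> omega
    rcases Nat.lt_or_ge p'' p with hcase | hcase
    · -- composition along a level strictly below `p`
      have hfac : ∀ j (hj : j < p'' + (k'' + 1)), p < j →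
          (ψ.toGlobHom.app _ x').bd j hj = 0 ∧ (ψ.toGlobHom.app _ x).bd j hj = 0 := by
        intro j hj hpj
        have hz := hvb j hj hpj
        rw [MCell.compc_bd_gt _ _ (by omega)] at hz
        exact mpair_add_eq_zero hz
      exact StrictOmegaCat.IsIden.comp_closed k'' hcase hp x' x h
        (ihx' p hp ⟨ht'.1, fun j hj hpj => (hfac j hj hpj).1⟩)
        (ihx p hp ⟨ht'.2, fun j hj hpj => (hfac j hj hpj).2⟩)
    · -- composition along a level at or above `p`
      have hfac : ∀ j (hj : j < p'' + (k'' + 1)), p < j →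
          (ψ.toGlobHom.app _ x).bd j hj = 0 ∧ (ψ.toGlobHom.app _ x').bd j hj = 0 := by
        intro j hj hpj
        rcases Nat.lt_or_ge j p'' with hj1 | hj1
        · have hz := hvb j hj hpj
          rw [MCell.compc_bd_lt _ _ hj1] at hz
          exact ⟨hz, by rw [hbd j hj hj1]; exact hz⟩
        · rcases Nat.lt_or_ge j (p'' + 1) with hj2 | hj2
          · have hjq : j = p'' := by omega
            subst hjq
            have hz := hvb j hj hpj
            rw [MCell.compc_bd_mid] at hz
            have c1 : ((ψ.toGlobHom.app _ x).bd j hj).1 = 0 := by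
              have := congrArg Prod.fst hz; exact this
            have c2 : ((ψ.toGlobHom.app _ x').bd j hj).2 = 0 := by
              have := congrArg Prod.snd hz; exact this
            have c1' : ((ψ.toGlobHom.app _ x).bd j hj).2 = 0 := by
              rw [← Multiset.card_eq_zero, ← psi_balance φ u ψ hψ hx j hj,
                Multiset.card_eq_zero]
              exact c1
            have c2' : ((ψ.toGlobHom.app _ x').bd j hj).1 = 0 := by
              rw [← Multiset.card_eq_zero, psi_balance φ u ψ hψ hx' j hj,
                Multiset.card_eq_zero]
              exact c2
            exact ⟨Prod.ext c1 c1', Prod.ext c2' c2⟩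
          · have hz := hvb j hj hpj
            rw [MCell.compc_bd_gt _ _ (by omega)] at hz
            have := mpair_add_eq_zero hz
            exact ⟨this.2, this.1⟩
      have hIx : C.IsIden p _ x :=
        ihx p hp ⟨ht'.2, fun j hj hpj => (hfac j hj hpj).1⟩
      have hIx' : C.IsIden p _ x' :=
        ihx' p hp ⟨ht'.1, fun j hj hpj => (hfac j hj hpj).2⟩
      have ex : x = iterId C.cells C.id' (k'' + 1)
          (C.toGlobSet.srcIter (k'' + 1) x') := by
        have := StrictOmegaCat.IsIden.split k'' hcase x hIx
        rw [← h] at this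
        exact this
      subst ex
      rw [C.comp_unit_right p'' k'' x' h]
      exact hIx'

include hψ in
theorem psi_gen {n : ℕ} {c : C.cells n} (hc : InS Q C u n c) :
    ∀ a : Q'.cells n, ψ.toGlobHom.app n c = (countUnit Q').app n a →
      ∃ x : Q.cells n, c = u.app n x ∧ φ.app n x = a := by
  induction hc with
  | gen n q =>
    intro a ha
    rw [hψ] at ha
    have ht : ({φ.app n q} : Multiset (Q'.cells n)) = {a} := congrArg MCell.top ha
    exact ⟨q, rfl, by simpa using ht⟩
  | @idc n x hx ih =>
    intro a ha
    exfalso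
    rw [psi_id] at ha
    have ht : (0 : Multiset (Q'.cells (n + 1))) = {a} := congrArg MCell.top ha
    exact absurd ht.symm (by simp)
  | @cmp p k x' x h hx' hx ihx' ihx =>
    intro a ha
    have ha0 := ha
    rw [psi_comp ψ h] at ha
    obtain ⟨hbd, hpp⟩ := mcomp_cond (psi_cond ψ h)
    have htop : (ψ.toGlobHom.app _ x').top + (ψ.toGlobHom.app _ x).top
        = ({a} : Multiset (Q'.cells (p + (k + 1)))) := congrArg MCell.top ha
    have hcard : Multiset.card (ψ.toGlobHom.app _ x').top
        + Multiset.card (ψ.toGlobHom.app _ x).top = 1 := by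
      have := congrArg Multiset.card htop
      rw [Multiset.card_add] at this
      simpa using this
    have hbdc := fun i hi => congrFun (congrFun (congrArg MCell.bd ha) i) hi
    by_cases hx0 : (ψ.toGlobHom.app _ x).top = 0
    · have hx'top : (ψ.toGlobHom.app _ x').top = {a} := by
        rw [hx0, add_zero] at htop
        exact htop
      have hvx : MVan (ψ.toGlobHom.app _ x) p := by
        refine ⟨hx0, fun i hi hpi => ?_⟩
        have hsum := hbdc i hi
        rw [MCell.compc_bd_gt _ _ hpi] at hsum
        have hfst : ((ψ.toGlobHom.app _ x').bd i hi).1 + ((ψ.toGlobHom.app _ x).bd i hi).1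
            = ({Q'.srcB _ a i hi} : Multiset (Q'.cells i)) := by
          have := congrArg Prod.fst hsum
          rw [Prod.fst_add] at this
          exact this
        have hcards : Multiset.card ((ψ.toGlobHom.app _ x').bd i hi).1
            + Multiset.card ((ψ.toGlobHom.app _ x).bd i hi).1 = 1 := by
          have := congrArg Multiset.card hfst
          rw [Multiset.card_add] at this
          simpa using this
        have hz : Multiset.card ((ψ.toGlobHom.app _ x).bd i hi).1 = 0 := by
          by_contra hne
          have hz' : ((ψ.toGlobHom.app _ x').bd i hi).1 = 0 := by
            rw [← Multiset.card_eq_zero]; omega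
          have h0 := (psi_prop φ u ψ hψ hx' i hi hz').1
          rw [h0] at hx'top
          exact absurd hx'top.symm (by simp)
        have h1 : ((ψ.toGlobHom.app _ x).bd i hi).1 = 0 := Multiset.card_eq_zero.mp hz
        have h2 : ((ψ.toGlobHom.app _ x).bd i hi).2 = 0 := by
          rw [← Multiset.card_eq_zero, ← psi_balance φ u ψ hψ hx i hi,
            Multiset.card_eq_zero]
          exact h1
        exact Prod.ext h1 h2
      have hIx := psi_iden φ u ψ hψ hx p (by omega) hvx
      have ex : x = iterId C.cells C.id' (k + 1) (C.toGlobSet.srcIter (k + 1) x') := by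
        have := StrictOmegaCat.IsIden.split k (le_refl p) x hIx
        rw [← h] at this
        exact this
      subst ex
      rw [C.comp_unit_right p k x' h] at ha0
      obtain ⟨x0, hc0, hφ0⟩ := ihx' a ha0
      exact ⟨x0, by rw [C.comp_unit_right p k x' h, hc0], hφ0⟩
    · have hx'0 : (ψ.toGlobHom.app _ x').top = 0 := by
        have hne : Multiset.card (ψ.toGlobHom.app _ x).top ≠ 0 := fun hcz =>
          hx0 (Multiset.card_eq_zero.mp hcz)
        rw [← Multiset.card_eq_zero]
        omega
      have hxtop : (ψ.toGlobHom.app _ x).top = {a} := by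
        rw [hx'0, zero_add] at htop
        exact htop
      have hvx' : MVan (ψ.toGlobHom.app _ x') p := by
        refine ⟨hx'0, fun i hi hpi => ?_⟩
        have hsum := hbdc i hi
        rw [MCell.compc_bd_gt _ _ hpi] at hsum
        have hfst : ((ψ.toGlobHom.app _ x').bd i hi).1 + ((ψ.toGlobHom.app _ x).bd i hi).1
            = ({Q'.srcB _ a i hi} : Multiset (Q'.cells i)) := by
          have := congrArg Prod.fst hsum
          rw [Prod.fst_add] at this
          exact this
        have hcards : Multiset.card ((ψ.toGlobHom.app _ x').bd i hi).1
            + Multiset.card ((ψ.toGlobHom.app _ x).bd i hi).1 = 1 := by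
          have := congrArg Multiset.card hfst
          rw [Multiset.card_add] at this
          simpa using this
        have hz : Multiset.card ((ψ.toGlobHom.app _ x').bd i hi).1 = 0 := by
          by_contra hne
          have hz' : ((ψ.toGlobHom.app _ x).bd i hi).1 = 0 := by
            rw [← Multiset.card_eq_zero]; omega
          have h0 := (psi_prop φ u ψ hψ hx i hi hz').1
          exact absurd h0 hx0
        have h1 : ((ψ.toGlobHom.app _ x').bd i hi).1 = 0 := Multiset.card_eq_zero.mp hz
        have h2 : ((ψ.toGlobHom.app _ x').bd i hi).2 = 0 := by
          rw [← Multiset.card_eq_zero, ← psi_balance φ u ψ hψ hx' i hi,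
            Multiset.card_eq_zero]
          exact h1
        exact Prod.ext h1 h2
      have hIx' := psi_iden φ u ψ hψ hx' p (by omega) hvx'
      have hst := StrictOmegaCat.IsIden.srcIter_eq_tgtIter (le_refl p) hIx'
      have ex : x' = iterId C.cells C.id' (k + 1) (C.toGlobSet.tgtIter (k + 1) x) := by
        have := StrictOmegaCat.IsIden.split k (le_refl p) x' hIx'
        exact this.trans (congrArg _ (hst.symm.trans h))
      subst ex
      rw [C.comp_unit_left p k x h] at ha0
      obtain ⟨x0, hc0, hφ0⟩ := ihx a ha0
      exact ⟨x0, by rw [C.comp_unit_left p k x h, hc0], hφ0⟩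

include hψ in
theorem psi_inj {n : ℕ} {q q' : Q.cells n} (h : u.app n q = u.app n q') :
    φ.app n q = φ.app n q' := by
  have h1 := congrArg (ψ.toGlobHom.app n) h
  rw [hψ, hψ] at h1
  have ht : ({φ.app n q} : Multiset (Q'.cells n)) = {φ.app n q'} := congrArg MCell.top h1
  simpa using ht

end Count

/-! ### Stage 7: generation from the adjunction, and the main theorem -/

section Main

variable (F : GlobSet ⥤ StrictOmegaCat) (adj : F ⊣ forgetStrict) (Q₁ : GlobSet)

/-- The unit, viewed as a map to the underlying globular set. -/
def etaHom : Q₁ ⟶ (F.obj Q₁).toGlobSet := adj.unit.app Q₁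

/-- Inclusion of the generated sub-ω-category. -/
def subInc : subCat Q₁ (F.obj Q₁) (etaHom F adj Q₁) ⟶ F.obj Q₁ where
  toGlobHom := ⟨fun n x => x.1, fun _ _ => rfl, fun _ _ => rfl⟩
  map_id _ _ := rfl
  map_comp _ _ _ _ _ _ := rfl

/-- Corestriction of the unit to the generated sub-ω-category. -/
def genUnit : Q₁ ⟶ forgetStrict.obj (subCat Q₁ (F.obj Q₁) (etaHom F adj Q₁)) where
  app n x := ⟨(etaHom F adj Q₁).app n x, InS.gen n x⟩
  app_src n x := Subtype.ext ((etaHom F adj Q₁).app_src n x)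
  app_tgt n x := Subtype.ext ((etaHom F adj Q₁).app_tgt n x)

/-- Every cell of `F.obj Q₁` is generated by the unit. -/
theorem gen_all : ∀ n (c : (F.obj Q₁).cells n),
    InS Q₁ (F.obj Q₁) (etaHom F adj Q₁) n c := by
  intro n c
  have hr : ((adj.homEquiv Q₁ (subCat Q₁ (F.obj Q₁) (etaHom F adj Q₁))).symm
        (genUnit F adj Q₁)) ≫ subInc F adj Q₁ = 𝟙 (F.obj Q₁) := by
    apply (adj.homEquiv Q₁ (F.obj Q₁)).injective
    rw [Adjunction.homEquiv_naturality_right, Equiv.apply_symm_apply,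
      Adjunction.homEquiv_id]
    exact GlobHom.hext fun n x => rfl
  have h2 := GlobHom.congr_app (congrArg StrictFunctor.toGlobHom hr) n c
  have h3 := (((adj.homEquiv Q₁ (subCat Q₁ (F.obj Q₁) (etaHom F adj Q₁))).symm
      (genUnit F adj Q₁)).toGlobHom.app n c).2
  rwa [show (((adj.homEquiv Q₁ (subCat Q₁ (F.obj Q₁) (etaHom F adj Q₁))).symm
      (genUnit F adj Q₁)).toGlobHom.app n c).1 = c from h2] at h3

end Main
/-- The unit `η : Id_{Qf} ⇒ U ∘ F` of the free strict globular ω-category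
adjunction `F ⊣ U` is a Cartesian natural transformation: for every morphism
`φ : Q₁ ⟶ Q₂` of globular ω-sets, the naturality square formed by `η_{Q₁}`, `φ`,
`(U∘F)(φ)` and `η_{Q₂}` is a pullback square in `Qf`. -/
theorem free_strict_unit_cartesian (F : GlobSet ⥤ StrictOmegaCat) (adj : F ⊣ forgetStrict)
    {Q₁ Q₂ : GlobSet} (φ : Q₁ ⟶ Q₂) :
    IsPullback φ (adj.unit.app Q₁) (adj.unit.app Q₂) ((F ⋙ forgetStrict).map φ) := by
  classical
  have hcomm : φ ≫ adj.unit.app Q₂ = adj.unit.app Q₁ ≫ (F ⋙ forgetStrict).map φ := by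
    simpa using adj.unit.naturality φ
  -- the two counting comparison functors and their triangle identities
  have hψtri : ∀ n (q : Q₁.cells n),
      ((adj.homEquiv Q₁ (MOmega Q₂)).symm (φ ≫ countUnit Q₂)).toGlobHom.app n
          ((etaHom F adj Q₁).app n q)
        = (countUnit Q₂).app n (φ.app n q) := by
    intro n q
    have h1 : adj.homEquiv Q₁ (MOmega Q₂) ((adj.homEquiv Q₁ (MOmega Q₂)).symm
        (φ ≫ countUnit Q₂)) = φ ≫ countUnit Q₂ := Equiv.apply_symm_apply _ _
    rw [Adjunction.homEquiv_unit] at h1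
    exact GlobHom.congr_app h1 n q
  have hψitri : ∀ n (q : Q₁.cells n),
      ((adj.homEquiv Q₁ (MOmega Q₁)).symm (𝟙 Q₁ ≫ countUnit Q₁)).toGlobHom.app n
          ((etaHom F adj Q₁).app n q)
        = (countUnit Q₁).app n (GlobHom.app (𝟙 Q₁) n q) := by
    intro n q
    have h1 : adj.homEquiv Q₁ (MOmega Q₁) ((adj.homEquiv Q₁ (MOmega Q₁)).symm
        (𝟙 Q₁ ≫ countUnit Q₁)) = 𝟙 Q₁ ≫ countUnit Q₁ := Equiv.apply_symm_apply _ _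
    rw [Adjunction.homEquiv_unit] at h1
    exact GlobHom.congr_app h1 n q
  have hinj : ∀ n (a b : Q₁.cells n),
      (adj.unit.app Q₁).app n a = (adj.unit.app Q₁).app n b → a = b := by
    intro n a b h
    exact psi_inj (𝟙 Q₁) (etaHom F adj Q₁)
      ((adj.homEquiv Q₁ (MOmega Q₁)).symm (𝟙 Q₁ ≫ countUnit Q₁)) hψitri h
  have he₂ : ∀ n (y : Q₂.cells n),
      ((adj.homEquiv Q₂ (MOmega Q₂)).symm (countUnit Q₂)).toGlobHom.app n
          ((adj.unit.app Q₂).app n y) = (countUnit Q₂).app n y := by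
    intro n y
    have h1 : adj.homEquiv Q₂ (MOmega Q₂) ((adj.homEquiv Q₂ (MOmega Q₂)).symm
        (countUnit Q₂)) = countUnit Q₂ := Equiv.apply_symm_apply _ _
    rw [Adjunction.homEquiv_unit] at h1
    exact GlobHom.congr_app h1 n y
  have hfact : (adj.homEquiv Q₁ (MOmega Q₂)).symm (φ ≫ countUnit Q₂)
      = F.map φ ≫ (adj.homEquiv Q₂ (MOmega Q₂)).symm (countUnit Q₂) := by
    apply (adj.homEquiv Q₁ (MOmega Q₂)).injective
    rw [Equiv.apply_symm_apply, Adjunction.homEquiv_naturality_left]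
    exact (congrArg (φ ≫ ·) (Equiv.apply_symm_apply _ _)).symm
  -- the key surjectivity property of the naturality square
  have hsurj : ∀ n (wc : (F.obj Q₁).cells n) (a : Q₂.cells n),
      (adj.unit.app Q₂).app n a = ((F ⋙ forgetStrict).map φ).app n wc →
      ∃ x : Q₁.cells n, wc = (adj.unit.app Q₁).app n x ∧ φ.app n x = a := by
    intro n wc a hwa
    apply psi_gen φ (etaHom F adj Q₁)
      ((adj.homEquiv Q₁ (MOmega Q₂)).symm (φ ≫ countUnit Q₂)) hψtri
      (gen_all F adj Q₁ n wc) a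
    rw [hfact]
    show ((adj.homEquiv Q₂ (MOmega Q₂)).symm (countUnit Q₂)).toGlobHom.app n
        ((F.map φ).toGlobHom.app n wc) = _
    rw [show ((F.map φ).toGlobHom.app n wc) = (adj.unit.app Q₂).app n a from hwa.symm]
    exact he₂ n a
  -- assemble the pullback
  refine IsPullback.of_isLimit
    (PullbackCone.isLimitAux' (PullbackCone.mk φ (adj.unit.app Q₁) hcomm) (fun s => ?_))
  have hcond : ∀ n (w : s.pt.cells n),
      (adj.unit.app Q₂).app n (s.fst.app n w)
        = ((F ⋙ forgetStrict).map φ).app n (s.snd.app n w) :=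
    fun n w => GlobHom.congr_app s.condition n w
  have hspec := fun n (w : s.pt.cells n) =>
    (hsurj n (s.snd.app n w) (s.fst.app n w) (hcond n w)).choose_spec
  refine ⟨⟨fun n w => (hsurj n (s.snd.app n w) (s.fst.app n w) (hcond n w)).choose,
      ?_, ?_⟩, ?_, ?_, ?_⟩
  · -- compatibility with sources
    intro n w
    apply hinj
    calc (adj.unit.app Q₁).app n (Q₁.src n
          (hsurj (n+1) (s.snd.app (n+1) w) (s.fst.app (n+1) w) (hcond (n+1) w)).choose)
        = @id (((F ⋙ forgetStrict).obj Q₁).cells n) ((F.obj Q₁).toGlobSet.src n ((adj.unit.app Q₁).app (n+1)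
            (hsurj (n+1) (s.snd.app (n+1) w) (s.fst.app (n+1) w) (hcond (n+1) w)).choose)) :=
          ((adj.unit.app Q₁).app_src n _).symm
      _ = @id (((F ⋙ forgetStrict).obj Q₁).cells n) ((F.obj Q₁).toGlobSet.src n (s.snd.app (n+1) w)) := by
          rw [← (hspec (n+1) w).1]
      _ = s.snd.app n (s.pt.src n w) := s.snd.app_src n w
      _ = (adj.unit.app Q₁).app n
            (hsurj n (s.snd.app n (s.pt.src n w)) (s.fst.app n (s.pt.src n w))
              (hcond n (s.pt.src n w))).choose := (hspec n (s.pt.src n w)).1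
  · -- compatibility with targets
    intro n w
    apply hinj
    calc (adj.unit.app Q₁).app n (Q₁.tgt n
          (hsurj (n+1) (s.snd.app (n+1) w) (s.fst.app (n+1) w) (hcond (n+1) w)).choose)
        = @id (((F ⋙ forgetStrict).obj Q₁).cells n) ((F.obj Q₁).toGlobSet.tgt n ((adj.unit.app Q₁).app (n+1)
            (hsurj (n+1) (s.snd.app (n+1) w) (s.fst.app (n+1) w) (hcond (n+1) w)).choose)) :=
          ((adj.unit.app Q₁).app_tgt n _).symm
      _ = @id (((F ⋙ forgetStrict).obj Q₁).cells n) ((F.obj Q₁).toGlobSet.tgt n (s.snd.app (n+1) w)) := by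
          rw [← (hspec (n+1) w).1]
      _ = s.snd.app n (s.pt.tgt n w) := s.snd.app_tgt n w
      _ = (adj.unit.app Q₁).app n
            (hsurj n (s.snd.app n (s.pt.tgt n w)) (s.fst.app n (s.pt.tgt n w))
              (hcond n (s.pt.tgt n w))).choose := (hspec n (s.pt.tgt n w)).1
  · exact GlobHom.hext fun n w => (hspec n w).2
  · exact GlobHom.hext fun n w => ((hspec n w).1).symm
  · intro m hm1 hm2
    refine GlobHom.hext fun n w => ?_
    apply hinj
    exact (GlobHom.congr_app hm2 n w).trans (hspec n w).1
end
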